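/- arXiv:1705.07987 — 6 statements merged into one kernel-verified Lean document; each statement's English description precedes it below -/
import Mathlib

section
/- Let $S$ be a random vector in $[-\infty,0]^d$ with $\max(S_1,\ldots,S_d) = 0$ almost surely, and let $E$ be a unit exponential random variable independent of $S$. Then for every $z \in \mathbb{R}^d$ with $\max(z) > 0$, $P[S + E \le z] = E[e^{\max(S - (z \wedge 0))}] - E[e^{\max(S - z)}]$, where $z \wedge 0$ denotes the componentwise minimum with $0$. -/
open MeasureTheory ProbabilityTheory

lemma gp_aux_sub_min (a : EReal) (b c : ℝ) :
    a - ((min b c : ℝ) : EReal) = (a - (b : EReal)) ⊔ (a - (c : EReal)) := by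
  induction a with
  | bot => simp [EReal.bot_sub]
  | coe a =>
    have h : a - min b c = max (a - b) (a - c) := by
      rcases le_total b c with h | h
      · rw [min_eq_left h, max_eq_left (by linarith)]
      · rw [min_eq_right h, max_eq_right (by linarith)]
    rw [← EReal.coe_sub, ← EReal.coe_sub, ← EReal.coe_sub, h]
    exact Monotone.map_max (fun x y hxy => EReal.coe_le_coe_iff.mpr hxy)
  | top => simp [EReal.top_sub_coe]

lemma gp_aux_sub_meas (c : ℝ) : Measurable fun x : EReal => x - (c : EReal) := by
  have h : Monotone fun x : EReal => x - (c : EReal) := fun a b h => EReal.sub_le_sub h le_rfl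
  exact h.measurable

/-- Let `S` be a spectral random vector (values in `[-∞,0]^d`, `max_j S_j = 0` a.s.,
`P[S_j > -∞] > 0` for all `j`) and `E` a unit exponential random variable independent
of `S`. Then for every `z ∈ ℝ^d` with `max z > 0`,
`P[S + E ≤ z] = E[e^{max(S - (z ∧ 0))}] - E[e^{max(S - z)}]`. -/
theorem gp_cdf_of_spectral
    {Ω : Type*} [MeasurableSpace Ω] (μ : Measure Ω) [IsProbabilityMeasure μ]
    {d : ℕ} (hd : 0 < d)
    (S : Ω → Fin d → EReal) (E : Ω → ℝ)
    (hSmeas : Measurable S) (hEmeas : Measurable E)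
    (hSle : ∀ ω j, S ω j ≤ 0)
    (hSmax : ∀ᵐ ω ∂μ, (⨆ j, S ω j) = 0)
    (hSbot : ∀ j, 0 < μ {ω | ⊥ < S ω j})
    (hE : ∀ t : ℝ, 0 ≤ t → μ {ω | t < E ω} = ENNReal.ofReal (Real.exp (-t)))
    (hindep : IndepFun S E μ)
    (z : Fin d → ℝ) (hz : 0 < ⨆ j, z j) :
    μ {ω | ∀ j, S ω j + (E ω : EReal) ≤ (z j : EReal)} =
      (∫⁻ ω, EReal.exp (⨆ j, S ω j - ((min (z j) 0 : ℝ) : EReal)) ∂μ)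
        - ∫⁻ ω, EReal.exp (⨆ j, S ω j - ((z j : ℝ) : EReal)) ∂μ := by
  have hne : Nonempty (Fin d) := ⟨⟨0, hd⟩⟩
  set M : Ω → EReal := fun ω => ⨆ j, (S ω j - (z j : EReal)) with hMdef
  have hexpmeas : Measurable EReal.exp := EReal.exp_monotone.measurable
  have hfmeas : Measurable (fun s : Fin d → EReal => ⨆ j, (s j - (z j : EReal))) :=
    Measurable.iSup fun j => (gp_aux_sub_meas (z j)).comp (measurable_pi_apply j)
  have hM : Measurable M := hfmeas.comp hSmeas
  -- uniform upper bound on M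
  obtain ⟨c, hc⟩ : ∃ c : ℝ, ∀ j, -(z j) ≤ c := Finite.exists_le _
  have hMle : ∀ ω, M ω ≤ (c : EReal) := by
    intro ω
    refine iSup_le fun j => le_trans (EReal.sub_le_sub (hSle ω j) le_rfl) ?_
    rw [zero_sub, ← EReal.coe_neg]
    exact_mod_cast hc j
  -- the exponential has no mass on (-∞, 0]
  have hE0 : μ {ω' | E ω' ≤ 0} = 0 := by
    have h1 : μ {ω' | (0:ℝ) < E ω'} = 1 := by
      simpa using hE 0 le_rfl
    have h2 : {ω' | E ω' ≤ 0} = {ω' | (0:ℝ) < E ω'}ᶜ := by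
      ext ω'; simp [not_lt]
    rw [h2, measure_compl (measurableSet_lt measurable_const hEmeas) (measure_ne_top μ _), h1,
      measure_univ, tsub_self]
  -- key pointwise computation
  have hg : ∀ m : EReal, μ {ω' | m ≤ ((-(E ω') : ℝ) : EReal)}
      = EReal.exp (m ⊔ 0) - EReal.exp m := by
    intro m
    induction m with
    | bot =>
      simp only [bot_le, Set.setOf_true, measure_univ, EReal.exp_bot]
      simp
    | top =>
      have : {ω' | (⊤ : EReal) ≤ ((-(E ω') : ℝ) : EReal)} = ∅ := by
        ext ω'; simp [top_le_iff, EReal.top_ne_coe]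
      simp [this]
    | coe r =>
      rcases le_or_gt r 0 with hr | hr
      · have hs : {ω' | ((r : ℝ) : EReal) ≤ ((-(E ω') : ℝ) : EReal)} = {ω' | -r < E ω'}ᶜ := by
          ext ω'
          simp only [Set.mem_setOf_eq, EReal.coe_le_coe_iff, Set.mem_compl_iff, not_lt]
          constructor <;> intro h <;> linarith
        rw [hs, measure_compl (measurableSet_lt measurable_const hEmeas) (measure_ne_top μ _),
          hE (-r) (by linarith), measure_univ, neg_neg]
        have : (r : EReal) ⊔ 0 = 0 := by
          rw [sup_eq_right]; exact_mod_cast hr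
        rw [this]
        simp
      · have hsub : {ω' | ((r : ℝ) : EReal) ≤ ((-(E ω') : ℝ) : EReal)} ⊆ {ω' | E ω' ≤ 0} := by
          intro ω' h
          simp only [Set.mem_setOf_eq, EReal.coe_le_coe_iff] at h ⊢
          linarith
        rw [measure_mono_null hsub hE0]
        have : (r : EReal) ⊔ 0 = (r : EReal) := by
          rw [sup_eq_left]; exact_mod_cast hr.le
        rw [this, tsub_self]
  -- rewrite the event
  have hsetM : {ω | ∀ j, S ω j + (E ω : EReal) ≤ (z j : EReal)}
      = (fun ω => (M ω, E ω)) ⁻¹' {p : EReal × ℝ | p.1 ≤ ((-p.2 : ℝ) : EReal)} := by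
    ext ω
    simp only [Set.mem_setOf_eq, Set.mem_preimage, hMdef, iSup_le_iff]
    refine forall_congr' fun j => ?_
    induction S ω j with
    | bot => simp
    | coe x =>
      norm_cast
      constructor <;> intro h <;> linarith
    | top =>
      simp only [EReal.top_sub_coe]
      rw [EReal.top_add_of_ne_bot (by simp)]
      simp [top_le_iff, EReal.top_ne_coe]
  have hs : MeasurableSet {p : EReal × ℝ | p.1 ≤ ((-p.2 : ℝ) : EReal)} :=
    measurableSet_le measurable_fst (measurable_coe_real_ereal.comp measurable_snd.neg)
  have hsm : ∀ m : EReal, MeasurableSet {e : ℝ | m ≤ ((-e : ℝ) : EReal)} := fun m =>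
    measurableSet_le measurable_const (measurable_coe_real_ereal.comp measurable_neg)
  -- independence of M and E
  have hME : IndepFun M E μ := hindep.comp hfmeas measurable_id
  have hmap : μ.map (fun ω => (M ω, E ω)) = (μ.map M).prod (μ.map E) :=
    (indepFun_iff_map_prod_eq_prod_map_map hM.aemeasurable hEmeas.aemeasurable).mp hME
  have hPE : IsProbabilityMeasure (μ.map E) := Measure.isProbabilityMeasure_map hEmeas.aemeasurable
  have hchain : μ {ω | ∀ j, S ω j + (E ω : EReal) ≤ (z j : EReal)}
      = ∫⁻ ω, (EReal.exp (M ω ⊔ 0) - EReal.exp (M ω)) ∂μ := by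
    rw [hsetM, ← Measure.map_apply (hM.prodMk hEmeas) hs, hmap, Measure.prod_apply hs,
      lintegral_map (measurable_measure_prodMk_left hs) hM]
    refine lintegral_congr fun ω => ?_
    have : (Prod.mk (M ω) ⁻¹' {p : EReal × ℝ | p.1 ≤ ((-p.2 : ℝ) : EReal)})
        = {e : ℝ | M ω ≤ ((-e : ℝ) : EReal)} := rfl
    rw [this, Measure.map_apply hEmeas (hsm (M ω))]
    exact hg (M ω)
  rw [hchain]
  -- finiteness of the subtracted integral
  have hI2 : ∫⁻ ω, EReal.exp (M ω) ∂μ ≠ ⊤ := by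
    refine ne_of_lt (lt_of_le_of_lt (lintegral_mono fun ω =>
      EReal.exp_monotone (hMle ω)) ?_)
    rw [lintegral_const, measure_univ, mul_one, EReal.exp_coe]
    exact ENNReal.ofReal_lt_top
  have hm2 : Measurable fun ω => EReal.exp (M ω) := hexpmeas.comp hM
  rw [lintegral_sub hm2 hI2
    (Filter.Eventually.of_forall fun ω => EReal.exp_monotone le_sup_left)]
  have hI1 : ∫⁻ ω, EReal.exp (M ω ⊔ 0) ∂μ
      = ∫⁻ ω, EReal.exp (⨆ j, S ω j - ((min (z j) 0 : ℝ) : EReal)) ∂μ := by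
    refine lintegral_congr_ae ?_
    filter_upwards [hSmax] with ω h0
    congr 1
    refine Eq.symm ?_
    calc (⨆ j, S ω j - ((min (z j) 0 : ℝ) : EReal))
        = ⨆ j, ((S ω j - (z j : EReal)) ⊔ (S ω j - ((0:ℝ) : EReal))) := by
          refine iSup_congr fun j => ?_
          exact gp_aux_sub_min (S ω j) (z j) 0
      _ = (⨆ j, (S ω j - (z j : EReal))) ⊔ (⨆ j, (S ω j - ((0:ℝ) : EReal))) := iSup_sup_eq
      _ = M ω ⊔ 0 := by
          rw [hMdef]
          congr 1
          have h00 : ∀ j, S ω j - ((0:ℝ):EReal) = S ω j := fun j => by norm_num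
          simp_rw [h00]
          exact h0
  rw [hI1]
end

section
/- Let $U$ be a random vector in $[-\infty,\infty)^d$ with $0 < E[e^{U_j}] < \infty$ for all $j$, and define a random vector $S$ (in distribution) by $P[S \in A] = E[\mathbf{1}\{U - \max(U) \in A\} e^{\max(U)}] / E[e^{\max(U)}]$. Then $S$ is a spectral random vector, and $E[e^{S_j}] = E[e^{U_j}]/E[e^{\max(U)}]$ for each $j = 1, \ldots, d$. -/
open MeasureTheory

lemma ereal_sub_eq (a b : EReal) : a - b =
    if a = ⊥ ∨ b = ⊤ then ⊥ else if a = ⊤ ∨ b = ⊥ then ⊤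
      else ((a.toReal - b.toReal : ℝ) : EReal) := by
  induction a <;> induction b <;>
    simp [EReal.bot_sub, EReal.sub_top, EReal.top_sub_coe, EReal.coe_sub_bot,
      EReal.top_sub_bot, ← EReal.coe_sub]

lemma measurable_ereal_sub {Ω : Type*} [MeasurableSpace Ω] {f g : Ω → EReal}
    (hf : Measurable f) (hg : Measurable g) : Measurable fun ω => f ω - g ω := by
  classical
  simp only [ereal_sub_eq]
  have h1 : MeasurableSet {ω | f ω = ⊥ ∨ g ω = ⊤} := by
    rw [Set.setOf_or]
    exact (hf (measurableSet_singleton _)).union (hg (measurableSet_singleton _))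
  have h2 : MeasurableSet {ω | f ω = ⊤ ∨ g ω = ⊥} := by
    rw [Set.setOf_or]
    exact (hf (measurableSet_singleton _)).union (hg (measurableSet_singleton _))
  exact Measurable.ite h1 measurable_const
    (Measurable.ite h2 measurable_const
      ((hf.ereal_toReal.sub hg.ereal_toReal).coe_real_ereal))

/-- Let `U` be a random vector in `[-∞,∞)^d` with `0 < E[e^{U_j}] < ∞` for all `j`,
and let `S` be a random vector whose law is the exponential tilting
`P[S ∈ A] = E[1{U - max U ∈ A} e^{max U}] / E[e^{max U}]`. Then `S` is a spectral
random vector (values in `[-∞,0]^d` with `max_j S_j = 0` a.s. and `P[S_j > -∞] > 0`),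
and `E[e^{S_j}] = E[e^{U_j}] / E[e^{max U}]` for each `j`. -/
theorem tilted_spectral_vector
    {Ω Ω' : Type*} [MeasurableSpace Ω] [MeasurableSpace Ω']
    (μ : Measure Ω) [IsProbabilityMeasure μ]
    (μ' : Measure Ω') [IsProbabilityMeasure μ']
    {d : ℕ} (hd : 0 < d)
    (U : Ω → Fin d → EReal) (hUmeas : Measurable U)
    (hUtop : ∀ ω j, U ω j < ⊤)
    (hUexp : ∀ j, 0 < ∫⁻ ω, EReal.exp (U ω j) ∂μ ∧ ∫⁻ ω, EReal.exp (U ω j) ∂μ < ⊤)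
    (S : Ω' → Fin d → EReal) (hSmeas : Measurable S)
    (hlaw : ∀ A : Set (Fin d → EReal), MeasurableSet A →
      μ' (S ⁻¹' A) =
        (∫⁻ ω, A.indicator (fun _ => (1 : ENNReal)) (fun j => U ω j - ⨆ k, U ω k)
            * EReal.exp (⨆ k, U ω k) ∂μ)
          / ∫⁻ ω, EReal.exp (⨆ k, U ω k) ∂μ) :
    (∀ᵐ ω' ∂μ', (∀ j, S ω' j ≤ 0) ∧ (⨆ j, S ω' j) = 0) ∧
      (∀ j, 0 < μ' {ω' | ⊥ < S ω' j}) ∧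
      (∀ j, ∫⁻ ω', EReal.exp (S ω' j) ∂μ' =
        (∫⁻ ω, EReal.exp (U ω j) ∂μ) / ∫⁻ ω, EReal.exp (⨆ k, U ω k) ∂μ) := by
  classical
  have hne : Nonempty (Fin d) := ⟨⟨0, hd⟩⟩
  have hexpmeas : Measurable EReal.exp := EReal.expHomeomorph.continuous.measurable
  have hUj : ∀ j, Measurable fun ω => U ω j := fun j => (measurable_pi_apply j).comp hUmeas
  have hMmeas : Measurable fun ω => ⨆ k, U ω k := Measurable.iSup fun k => hUj k
  set V : Ω → Fin d → EReal := fun ω j => U ω j - ⨆ k, U ω k with hV_def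
  set g : Ω → ENNReal := fun ω => EReal.exp (⨆ k, U ω k) with hg_def
  set Z : ENNReal := ∫⁻ ω, EReal.exp (⨆ k, U ω k) ∂μ with hZ_def
  have hVmeas : Measurable V := measurable_pi_lambda _ fun j => measurable_ereal_sub (hUj j) hMmeas
  have hgmeas : Measurable g := hexpmeas.comp hMmeas
  have hleM : ∀ ω j, U ω j ≤ ⨆ k, U ω k := fun ω j => le_iSup (U ω) j
  have hMex : ∀ ω, ∃ j, U ω j = ⨆ k, U ω k := fun ω => exists_eq_ciSup_of_finite
  have hMtop : ∀ ω, (⨆ k, U ω k) < ⊤ := by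
    intro ω; obtain ⟨j, hj⟩ := hMex ω; rw [← hj]; exact hUtop ω j
  have hMreal : ∀ ω, (⨆ k, U ω k) ≠ ⊥ → ∃ r : ℝ, (⨆ k, U ω k) = (r : EReal) :=
    fun ω hb => ⟨(⨆ k, U ω k).toReal, (EReal.coe_toReal (hMtop ω).ne hb).symm⟩
  -- claim (a)
  have hVspec : ∀ ω, (⨆ k, U ω k) ≠ ⊥ →
      (∀ j, V ω j ≤ 0) ∧ (⨆ j, V ω j) = 0 := by
    intro ω hb
    obtain ⟨r, hr⟩ := hMreal ω hb
    obtain ⟨j₀, hj₀⟩ := hMex ω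
    have hle : ∀ j, V ω j ≤ 0 := by
      intro j
      have : V ω j ≤ (r : EReal) - r := by
        simp only [hV_def, hr]
        exact EReal.sub_le_sub (hr ▸ hleM ω j) le_rfl
      calc V ω j ≤ (r : EReal) - r := this
        _ = 0 := by rw [← EReal.coe_sub]; norm_num
    have hj₀0 : V ω j₀ = 0 := by
      simp only [hV_def, hj₀, hr, ← EReal.coe_sub]; norm_num
    exact ⟨hle, le_antisymm (iSup_le hle) (hj₀0 ▸ le_iSup _ j₀)⟩
  -- claim (b)
  have hb : ∀ ω j, EReal.exp (V ω j) * g ω = EReal.exp (U ω j) := by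
    intro ω j
    by_cases hbot : (⨆ k, U ω k) = ⊥
    · have hUb : U ω j = ⊥ := le_bot_iff.mp (hbot ▸ hleM ω j)
      simp [hV_def, hg_def, hbot, hUb]
    · obtain ⟨r, hr⟩ := hMreal ω hbot
      simp only [hV_def, hg_def, hr, ← EReal.exp_add, EReal.sub_add_cancel]
  -- Z bounds
  have hZpos : 0 < Z := by
    refine lt_of_lt_of_le (hUexp ⟨0, hd⟩).1 (lintegral_mono fun ω => ?_)
    exact EReal.exp_monotone (hleM ω ⟨0, hd⟩)
  have hZtop : Z < ⊤ := by
    have hle : ∀ ω, EReal.exp (⨆ k, U ω k) ≤ ∑ i : Fin d, EReal.exp (U ω i) := by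
      intro ω
      obtain ⟨j₀, hj₀⟩ := hMex ω
      rw [← hj₀]
      exact Finset.single_le_sum (f := fun i => EReal.exp (U ω i)) (fun i _ => by positivity) (Finset.mem_univ j₀)
    calc Z ≤ ∫⁻ ω, ∑ i : Fin d, EReal.exp (U ω i) ∂μ := lintegral_mono hle
      _ = ∑ i : Fin d, ∫⁻ ω, EReal.exp (U ω i) ∂μ :=
        lintegral_finset_sum _ fun i _ => hexpmeas.comp (hUj i)
      _ < ⊤ := ENNReal.sum_lt_top.mpr fun i _ => (hUexp i).2
  -- the map measure identity
  have hmap : μ'.map S = Z⁻¹ • ((μ.withDensity g).map V) := by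
    ext A hA
    rw [Measure.map_apply hSmeas hA, hlaw A hA, Measure.smul_apply, smul_eq_mul,
      Measure.map_apply hVmeas hA, withDensity_apply _ (hVmeas hA),
      ← lintegral_indicator (hVmeas hA) g, ENNReal.div_eq_inv_mul]
    congr 1
    refine lintegral_congr fun ω => ?_
    by_cases hω : V ω ∈ A
    · rw [Set.indicator_of_mem hω, Set.indicator_of_mem (by exact hω), one_mul]
    · rw [Set.indicator_of_notMem hω, Set.indicator_of_notMem (by exact hω), zero_mul]
  have key : ∀ (f : (Fin d → EReal) → ENNReal), Measurable f →
      ∫⁻ ω', f (S ω') ∂μ' = (∫⁻ ω, f (V ω) * g ω ∂μ) / Z := by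
    intro f hf
    calc ∫⁻ ω', f (S ω') ∂μ' = ∫⁻ s, f s ∂(μ'.map S) := (lintegral_map hf hSmeas).symm
      _ = Z⁻¹ * ∫⁻ s, f s ∂((μ.withDensity g).map V) := by rw [hmap, lintegral_smul_measure, smul_eq_mul]
      _ = Z⁻¹ * ∫⁻ ω, f (V ω) ∂(μ.withDensity g) := by rw [lintegral_map hf hVmeas]
      _ = Z⁻¹ * ∫⁻ ω, g ω * f (V ω) ∂μ := by
          have h := lintegral_withDensity_eq_lintegral_mul μ hgmeas (hf.comp hVmeas)
          simp only [Function.comp_apply, Pi.mul_apply] at h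
          rw [h]
      _ = (∫⁻ ω, f (V ω) * g ω ∂μ) / Z := by
          rw [ENNReal.div_eq_inv_mul]
          congr 1
          exact lintegral_congr fun ω => mul_comm _ _
  refine ⟨?_, ?_, ?_⟩
  · -- spectral a.e.
    rw [ae_iff]
    set A₀ : Set (Fin d → EReal) := {s | (∀ j, s j ≤ 0) ∧ (⨆ j, s j) = 0} with hA₀_def
    have hA₀ : MeasurableSet A₀ := by
      have h1 : A₀ = (⋂ j, (fun s : Fin d → EReal => s j) ⁻¹' Set.Iic 0) ∩
          ((fun s : Fin d → EReal => ⨆ j, s j) ⁻¹' {0}) := by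
        ext s; simp [hA₀_def, Set.mem_iInter]
      rw [h1]
      exact (MeasurableSet.iInter fun j => measurable_pi_apply j measurableSet_Iic).inter
        ((Measurable.iSup fun j => measurable_pi_apply j) (measurableSet_singleton 0))
    have hset : {ω' | ¬((∀ j, S ω' j ≤ 0) ∧ (⨆ j, S ω' j) = 0)} = S ⁻¹' A₀ᶜ := rfl
    rw [hset, hlaw _ hA₀.compl]
    have hzero : ∀ ω, (A₀ᶜ).indicator (fun _ => (1:ENNReal)) (fun j => U ω j - ⨆ k, U ω k)
        * EReal.exp (⨆ k, U ω k) = 0 := by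
      intro ω
      by_cases hbot : (⨆ k, U ω k) = ⊥
      · simp [hbot]
      · have hmem : (fun j => U ω j - ⨆ k, U ω k) ∈ A₀ := hVspec ω hbot
        rw [Set.indicator_of_notMem (by simpa using hmem), zero_mul]
    rw [lintegral_congr hzero, lintegral_zero, ENNReal.zero_div]
  · -- positivity
    intro j
    have hAj : MeasurableSet {s : Fin d → EReal | ⊥ < s j} :=
      measurable_pi_apply j measurableSet_Ioi
    have hset : {ω' | ⊥ < S ω' j} = S ⁻¹' {s : Fin d → EReal | ⊥ < s j} := rfl
    rw [hset, hlaw _ hAj]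
    have hptwise : ∀ ω, EReal.exp (U ω j) ≤
        ({s : Fin d → EReal | ⊥ < s j}).indicator (fun _ => (1:ENNReal))
          (fun i => U ω i - ⨆ k, U ω k) * EReal.exp (⨆ k, U ω k) := by
      intro ω
      by_cases hUb : U ω j = ⊥
      · simp [hUb]
      · have hMb : (⨆ k, U ω k) ≠ ⊥ := fun h => hUb (le_bot_iff.mp (h ▸ hleM ω j))
        obtain ⟨r, hr⟩ := hMreal ω hMb
        have hu : ∃ u : ℝ, U ω j = (u : EReal) :=
          ⟨(U ω j).toReal, (EReal.coe_toReal (hUtop ω j).ne hUb).symm⟩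
        obtain ⟨u, hu⟩ := hu
        have hmem : (fun i => U ω i - ⨆ k, U ω k) ∈ {s : Fin d → EReal | ⊥ < s j} := by
          show ⊥ < U ω j - ⨆ k, U ω k
          rw [hu, hr, ← EReal.coe_sub]
          exact EReal.bot_lt_coe _
        rw [Set.indicator_of_mem hmem, one_mul]
        exact EReal.exp_monotone (hleM ω j)
    refine lt_of_lt_of_le (ENNReal.div_pos (hUexp j).1.ne' hZtop.ne) ?_
    exact ENNReal.div_le_div_right (lintegral_mono hptwise) Z
  · -- tilted exponential moments
    intro j
    have hf : Measurable fun s : Fin d → EReal => EReal.exp (s j) :=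
      hexpmeas.comp (measurable_pi_apply j)
    have := key _ hf
    rw [this]
    congr 1
    exact lintegral_congr fun ω => hb ω j
end

section
/- Let $S$ be a spectral random vector supported on $\{s \in \mathbb{R}^d : \max(s) = 0\}$ with density $f_S$ with respect to the $(d-1)$-dimensional Lebesgue measure on that set, and let $E \sim \mathrm{Exp}(1)$ be independent of $S$. Then $Z = S + E$ has $d$-dimensional Lebesgue density $h(z) = \mathbf{1}(z \not\le 0)\, f_S(z - \max(z))\, e^{-\max(z)}$. -/
open MeasureTheory ENNReal
open scoped Classical

/-- The `(d-1)`-dimensional Lebesgue measure on the set `{s ∈ ℝ^d : max s = 0}`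
(equivalently on `{s ≤ 0 : max s = 0}`), obtained as the sum over the faces
`{s : s_j = max s = 0}` of the pushforward of `(d-1)`-dimensional Lebesgue measure
on the nonpositive orthant under the embedding inserting `0` in coordinate `j`. -/
noncomputable def faceMeasure (d : ℕ) : Measure (Fin d → ℝ) :=
  ∑ j : Fin d,
    Measure.map
      (fun s : {k : Fin d // k ≠ j} → ℝ => fun i : Fin d =>
        if h : i = j then 0 else s ⟨i, h⟩)
      (volume.restrict {s : {k : Fin d // k ≠ j} → ℝ | ∀ k, s k ≤ 0})

namespace GP

variable {α β : Type*} [MeasurableSpace α] [MeasurableSpace β]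

lemma withDensity_map_comm (μ : Measure α) {g : α → β} (hg : Measurable g)
    {f : β → ℝ≥0∞} (hf : Measurable f) :
    (μ.map g).withDensity f = (μ.withDensity (f ∘ g)).map g := by
  ext s hs
  rw [withDensity_apply _ hs, Measure.map_apply hg hs,
    withDensity_apply _ (hg hs), setLIntegral_map hs hf hg]
  rfl

lemma map_finset_sum {ι : Type*} (t : Finset ι) (ν : ι → Measure α)
    {g : α → β} (hg : Measurable g) :
    Measure.map g (∑ i ∈ t, ν i) = ∑ i ∈ t, Measure.map g (ν i) := by
  ext s hs
  simp [Measure.map_apply hg hs, Measure.finset_sum_apply]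

lemma restrict_finset_sum {ι : Type*} (t : Finset ι) (ν : ι → Measure α) (s : Set α) :
    (∑ i ∈ t, ν i).restrict s = ∑ i ∈ t, (ν i).restrict s := by
  classical
  induction t using Finset.induction_on with
  | empty => simp
  | insert a s h ih => simp [Finset.sum_insert h, Measure.restrict_add, ih]

lemma withDensity_finset_sum {ι : Type*} (t : Finset ι) (ν : ι → Measure α)
    (f : α → ℝ≥0∞) :
    (∑ i ∈ t, ν i).withDensity f = ∑ i ∈ t, (ν i).withDensity f := by
  ext s hs
  rw [withDensity_apply _ hs, restrict_finset_sum, lintegral_finset_sum_measure]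
  simp [withDensity_apply _ hs, Measure.finset_sum_apply]

lemma withDensity_sum_fun {ι : Type*} (μ : Measure α) (t : Finset ι)
    (f : ι → α → ℝ≥0∞) (hf : ∀ i, Measurable (f i)) :
    μ.withDensity (fun a => ∑ i ∈ t, f i a) = ∑ i ∈ t, μ.withDensity (f i) := by
  classical
  induction t using Finset.induction_on with
  | empty => simp
  | @insert i t hi ih =>
      simp only [Finset.sum_insert hi]
      have hsplit : (fun a => f i a + ∑ j ∈ t, f j a)
          = f i + fun a => ∑ j ∈ t, f j a := rfl
      rw [hsplit, withDensity_add_left (hf i), ih]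

lemma prod_withDensity (μ : Measure α) (ν : Measure β) [SigmaFinite μ] [SigmaFinite ν]
    {f : α → ℝ≥0∞} {g : β → ℝ≥0∞} (hf : Measurable f) (hg : Measurable g)
    [SigmaFinite (μ.withDensity f)] [SigmaFinite (ν.withDensity g)] :
    (μ.withDensity f).prod (ν.withDensity g)
      = (μ.prod ν).withDensity (fun p => f p.1 * g p.2) := by
  refine Measure.prod_eq fun s t hs ht => ?_
  rw [withDensity_apply _ ((hs.prod ht)), ← Measure.prod_restrict,
    lintegral_prod_mul hf.aemeasurable hg.aemeasurable,
    withDensity_apply _ hs, withDensity_apply _ ht]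

lemma finset_sum_prod {ι : Type*} (t : Finset ι) (ν : ι → Measure α) (ρ : Measure β)
    [SigmaFinite ρ] [SigmaFinite (∑ i ∈ t, ν i)] :
    (∑ i ∈ t, ν i).prod ρ = ∑ i ∈ t, (ν i).prod ρ := by
  refine Measure.prod_eq fun s u hs hu => ?_
  rw [Measure.finset_sum_apply, Measure.finset_sum_apply, Finset.sum_mul]
  exact Finset.sum_congr rfl fun i _ => Measure.prod_prod s u

lemma law_of_E {Ω : Type*} [MeasurableSpace Ω] (μ : Measure Ω) [IsProbabilityMeasure μ]
    {E : Ω → ℝ} (hEmeas : Measurable E)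
    (hE : ∀ t : ℝ, 0 ≤ t → μ {ω | t < E ω} = ENNReal.ofReal (Real.exp (-t))) :
    μ.map E = volume.withDensity
      (fun t => if 0 < t then ENNReal.ofReal (Real.exp (-t)) else 0) := by
  have hle : ∀ t : ℝ, 0 ≤ t → μ (E ⁻¹' Set.Iic t) = 1 - ENNReal.ofReal (Real.exp (-t)) := by
    intro t ht
    have hc : (E ⁻¹' Set.Iic t)ᶜ = {ω | t < E ω} := by
      ext ω; simp [not_le]
    have := prob_compl_eq_one_sub (μ := μ) (s := E ⁻¹' Set.Iic t) (hEmeas measurableSet_Iic)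
    rw [hc, hE t ht] at this
    have h2 : μ (E ⁻¹' Set.Iic t) ≤ 1 := prob_le_one
    rw [this, ENNReal.sub_sub_cancel ENNReal.one_ne_top h2]
  haveI : IsProbabilityMeasure (μ.map E) := Measure.isProbabilityMeasure_map hEmeas.aemeasurable
  refine Measure.ext_of_Iic _ _ fun a => ?_
  rw [Measure.map_apply hEmeas measurableSet_Iic]
  rcases le_or_gt 0 a with ha | ha
  · rw [hle a ha, withDensity_apply _ measurableSet_Iic]
    have hind : (fun t : ℝ => if 0 < t then ENNReal.ofReal (Real.exp (-t)) else 0)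
        = (Set.Ioi (0:ℝ)).indicator (fun t => ENNReal.ofReal (Real.exp (-t))) := by
      funext t; by_cases h : 0 < t <;> simp [Set.indicator, h]
    rw [hind, lintegral_indicator measurableSet_Ioi, Measure.restrict_restrict measurableSet_Ioi]
    have hinter : Set.Ioi (0:ℝ) ∩ Set.Iic a = Set.Ioc 0 a := rfl
    rw [hinter]
    have hint : IntegrableOn (fun x : ℝ => Real.exp (-x)) (Set.Ioc 0 a) :=
      (Real.continuous_exp.comp continuous_neg).integrableOn_Ioc
    rw [← ofReal_integral_eq_lintegral_ofReal hint
      (Filter.Eventually.of_forall fun x => (Real.exp_pos _).le)]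
    have : ∫ x in Set.Ioc 0 a, Real.exp (-x) = 1 - Real.exp (-a) := by
      rw [← intervalIntegral.integral_of_le ha]
      rw [intervalIntegral.integral_comp_neg (fun x => Real.exp x)]
      rw [integral_exp]
      simp
    rw [this, ENNReal.ofReal_sub _ (Real.exp_pos _).le, ENNReal.ofReal_one]
  · have h0 : μ (E ⁻¹' Set.Iic a) = 0 := by
      have hmono : μ (E ⁻¹' Set.Iic a) ≤ μ (E ⁻¹' Set.Iic 0) :=
        measure_mono (Set.preimage_mono (Set.Iic_subset_Iic.mpr ha.le))
      rw [hle 0 le_rfl] at hmono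
      simpa using hmono
    rw [h0, withDensity_apply _ measurableSet_Iic]
    rw [setLIntegral_congr_fun measurableSet_Iic
      (fun x (hx : x ≤ a) => by
        rw [if_neg (by linarith)])]
    simp

variable {d : ℕ}

/-- The embedding inserting `0` in coordinate `j`. -/
def emb (j : Fin d) (s : {k : Fin d // k ≠ j} → ℝ) : Fin d → ℝ :=
  fun i => if h : i = j then 0 else s ⟨i, h⟩

/-- The nonpositive orthant. -/
def Q (j : Fin d) : Set ({k : Fin d // k ≠ j} → ℝ) := {s | ∀ k, s k ≤ 0}

/-- The change-of-variables map `(s, e) ↦ emb j s + e • 1`. -/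
noncomputable def Tmap (j : Fin d) (p : ({k : Fin d // k ≠ j} → ℝ) × ℝ) : Fin d → ℝ :=
  fun i => if h : i = j then p.2 else p.1 ⟨i, h⟩ + p.2

/-- Density of the exponential law. -/
noncomputable def eD : ℝ → ℝ≥0∞ := fun t => if 0 < t then ENNReal.ofReal (Real.exp (-t)) else 0

/-- Density of the spectral measure on the `j`-th face, pulled back to the orthant. -/
noncomputable def fD (fS : (Fin d → ℝ) → ℝ≥0∞) (j : Fin d) :
    ({k : Fin d // k ≠ j} → ℝ) → ℝ≥0∞ :=
  (Q j).indicator (fS ∘ emb j)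

/-- The `j`-th piece of the limiting density. -/
noncomputable def H (fS : (Fin d → ℝ) → ℝ≥0∞) (j : Fin d) : (Fin d → ℝ) → ℝ≥0∞ :=
  fun z => if 0 < z j ∧ ∀ i, z i ≤ z j then
    fS (fun i => z i - z j) * ENNReal.ofReal (Real.exp (-(z j))) else 0

lemma measurable_emb (j : Fin d) : Measurable (emb j) := by
  refine measurable_pi_lambda _ fun i => ?_
  by_cases h : i = j
  · simp only [emb, dif_pos h]; exact measurable_const
  · simp only [emb, dif_neg h]; exact measurable_pi_apply _

lemma measurableSet_Q (j : Fin d) : MeasurableSet (Q j) := by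
  have : Q j = ⋂ k, {s : {k : Fin d // k ≠ j} → ℝ | s k ≤ 0} := by
    ext s; simp [Q, Set.mem_iInter]
  rw [this]
  exact MeasurableSet.iInter fun k =>
    measurableSet_le (measurable_pi_apply k) measurable_const

lemma measurable_fD {fS : (Fin d → ℝ) → ℝ≥0∞} (hfS : Measurable fS) (j : Fin d) :
    Measurable (fD fS j) :=
  (hfS.comp (measurable_emb j)).indicator (measurableSet_Q j)

lemma measurable_eD : Measurable eD :=
  Measurable.ite measurableSet_Ioi
    (ENNReal.measurable_ofReal.comp (Real.measurable_exp.comp measurable_neg))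
    measurable_const

lemma measurable_Tmap (j : Fin d) : Measurable (Tmap j) := by
  refine measurable_pi_lambda _ fun i => ?_
  by_cases h : i = j
  · simp only [Tmap, dif_pos h]; exact measurable_snd
  · simp only [Tmap, dif_neg h]
    exact (measurable_fst.eval).add measurable_snd

lemma measurable_H {fS : (Fin d → ℝ) → ℝ≥0∞} (hfS : Measurable fS) (j : Fin d) :
    Measurable (H fS j) := by
  have h1 : MeasurableSet {z : Fin d → ℝ | 0 < z j} :=
    measurableSet_lt measurable_const (measurable_pi_apply j)
  have h2 : MeasurableSet {z : Fin d → ℝ | ∀ i, z i ≤ z j} := by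
    rw [Set.setOf_forall]
    exact MeasurableSet.iInter fun i =>
      measurableSet_le (measurable_pi_apply i) (measurable_pi_apply j)
  have hset : MeasurableSet {z : Fin d → ℝ | 0 < z j ∧ ∀ i, z i ≤ z j} := by
    have := h1.inter h2
    rwa [← Set.setOf_and] at this
  exact Measurable.ite hset
    ((hfS.comp (measurable_pi_lambda _ fun i =>
      (measurable_pi_apply i).sub (measurable_pi_apply j))).mul
      (ENNReal.measurable_ofReal.comp (Real.measurable_exp.comp
        ((measurable_pi_apply j).neg))))
    measurable_const

end GP

namespace GP

variable {d : ℕ}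

lemma vol_fintype_irrel {ι : Type*} (h1 h2 : Fintype ι) :
    @MeasureTheory.MeasureSpace.volume _
      (@MeasureTheory.MeasureSpace.pi ι h1 (fun _ => ℝ) (fun _ => Real.measureSpace)) =
    @MeasureTheory.MeasureSpace.volume _
      (@MeasureTheory.MeasureSpace.pi ι h2 (fun _ => ℝ) (fun _ => Real.measureSpace)) := by
  cases Subsingleton.elim h1 h2; rfl

instance uniqEq (j : Fin d) : Unique {i : Fin d // i = j} where
  default := ⟨j, rfl⟩
  uniq a := Subtype.ext a.2

lemma measurePreserving_Tmap (j : Fin d) :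
    MeasurePreserving (Tmap j)
      ((volume : Measure ({k : Fin d // k ≠ j} → ℝ)).prod (volume : Measure ℝ))
      (volume : Measure (Fin d → ℝ)) := by
  have hswap : MeasurePreserving (Prod.swap : (({k : Fin d // k ≠ j} → ℝ) × ℝ) → _)
      (Measure.prod volume volume) (Measure.prod volume volume) :=
    Measure.measurePreserving_swap
  have hgm : Measurable (Function.uncurry fun (e : ℝ) (s : {k : Fin d // k ≠ j} → ℝ) =>
      (fun k => s k + e : {k : Fin d // k ≠ j} → ℝ)) :=
    measurable_pi_lambda _ fun k => (measurable_snd.eval).add measurable_fst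
  have hg : ∀ᵐ e ∂(volume : Measure ℝ),
      Measure.map (fun s : {k : Fin d // k ≠ j} → ℝ => fun k => s k + e) volume
        = (volume : Measure ({k : Fin d // k ≠ j} → ℝ)) := by
    refine Filter.Eventually.of_forall fun e => ?_
    have : (fun s : {k : Fin d // k ≠ j} → ℝ => fun k => s k + e)
        = (fun s : {k : Fin d // k ≠ j} → ℝ => s + (fun _ => e)) := by
      funext s; rfl
    rw [this]
    exact map_add_right_eq_self volume (fun _ => e)
  have hskew : MeasurePreserving
      (fun p : ℝ × ({k : Fin d // k ≠ j} → ℝ) => (p.1, fun k => p.2 k + p.1))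
      (Measure.prod volume volume) (Measure.prod volume volume) :=
    MeasurePreserving.skew_product (f := (id : ℝ → ℝ)) (MeasurePreserving.id _) hgm hg
  have hψ0 : MeasurePreserving
      ((MeasurableEquiv.piEquivPiSubtypeProd (fun _ : Fin d => ℝ) (fun i => i = j)).symm)
      (Measure.prod volume volume) volume := by
    have h := (volume_preserving_piEquivPiSubtypeProd (fun _ : Fin d => ℝ)
      (fun i => i = j)).symm
    rw [Measure.volume_eq_prod] at h
    convert h using 2 <;> congr <;> exact Subsingleton.elim _ _
  have hfu : MeasurePreserving
      (fun e : ℝ => (fun _ : {i : Fin d // i = j} => e))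
      volume (volume : Measure ({i : Fin d // i = j} → ℝ)) :=
    (volume_preserving_funUnique {i : Fin d // i = j} ℝ).symm
  have hψ : MeasurePreserving
      (fun q : ℝ × ({k : Fin d // k ≠ j} → ℝ) =>
        (MeasurableEquiv.piEquivPiSubtypeProd (fun _ : Fin d => ℝ) (fun i => i = j)).symm
          ((fun _ : {i : Fin d // i = j} => q.1), q.2))
      (Measure.prod volume volume) volume := by
    have hmp := hψ0.comp (hfu.prod (MeasurePreserving.id
      (volume : Measure ({k : Fin d // k ≠ j} → ℝ))))
    exact hmp
  have hT : Tmap j = (fun q : ℝ × ({k : Fin d // k ≠ j} → ℝ) =>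
        (MeasurableEquiv.piEquivPiSubtypeProd (fun _ : Fin d => ℝ) (fun i => i = j)).symm
          ((fun _ : {i : Fin d // i = j} => q.1), q.2))
      ∘ (fun p : ℝ × ({k : Fin d // k ≠ j} → ℝ) => (p.1, fun k => p.2 k + p.1))
      ∘ Prod.swap := by
    funext p
    funext i
    simp only [Function.comp_apply, Prod.swap, MeasurableEquiv.piEquivPiSubtypeProd,
      MeasurableEquiv.symm, MeasurableEquiv.coe_mk, Equiv.symm_symm,
      Equiv.piEquivPiSubtypeProd_symm_apply, Tmap]
    try (by_cases h : i = j <;> simp [h])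
  rw [hT]
  exact (hψ.comp hskew).comp hswap

lemma fD_eD_eq (fS : (Fin d → ℝ) → ℝ≥0∞) (j : Fin d)
    (p : ({k : Fin d // k ≠ j} → ℝ) × ℝ) :
    fD fS j p.1 * eD p.2 = H fS j (Tmap j p) := by
  obtain ⟨s, e⟩ := p
  have hj : Tmap j (s, e) j = e := dif_pos rfl
  by_cases he : 0 < e
  · by_cases hs : s ∈ Q j
    · have hcond : 0 < Tmap j (s, e) j ∧ ∀ i, Tmap j (s, e) i ≤ Tmap j (s, e) j := by
        refine ⟨by rw [hj]; exact he, fun i => ?_⟩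
        rw [hj]
        by_cases h : i = j
        · subst h; rw [hj]
        · simp only [Tmap, dif_neg h]
          have := hs ⟨i, h⟩
          simp only [Q, Set.mem_setOf_eq] at hs
          linarith [hs ⟨i, h⟩]
      have harg : (fun i => Tmap j (s, e) i - Tmap j (s, e) j) = emb j s := by
        funext i
        by_cases h : i = j
        · subst h; simp [Tmap, emb]
        · simp [Tmap, emb, dif_neg h, hj]
      simp only [H]
      rw [if_pos hcond, harg, hj]
      simp only [fD, Set.indicator_of_mem hs, Function.comp_apply, eD, if_pos he]
    · have hcond : ¬(0 < Tmap j (s, e) j ∧ ∀ i, Tmap j (s, e) i ≤ Tmap j (s, e) j) := by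
        rintro ⟨-, hall⟩
        obtain ⟨k, hk⟩ : ∃ k, 0 < s k := by
          simpa [Q, not_forall, not_le] using hs
        have h1 := hall k.1
        rw [hj] at h1
        have h2 : Tmap j (s, e) k.1 = s k + e := by
          simp only [Tmap, dif_neg k.2, Subtype.coe_eta]
        rw [h2] at h1
        linarith
      simp only [H, if_neg hcond, fD, Set.indicator_of_notMem hs, zero_mul]
  · have hcond : ¬(0 < Tmap j (s, e) j ∧ ∀ i, Tmap j (s, e) i ≤ Tmap j (s, e) j) := by
      rintro ⟨h1, -⟩; rw [hj] at h1; exact he h1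
    simp only [H, if_neg hcond, eD, if_neg he, mul_zero]

lemma sum_H_ae (hd : 0 < d) (fS : (Fin d → ℝ) → ℝ≥0∞) :
    (fun z : Fin d → ℝ => ∑ j : Fin d, H fS j z) =ᵐ[(volume : Measure (Fin d → ℝ))]
      (fun z => if ∃ j, 0 < z j then
          fS (fun j => z j - ⨆ k, z k) * ENNReal.ofReal (Real.exp (-(⨆ k, z k)))
        else 0) := by
  haveI : Nonempty (Fin d) := ⟨⟨0, hd⟩⟩
  set N : Set (Fin d → ℝ) :=
    ⋃ (j : Fin d) (k : Fin d) (_ : j ≠ k), {z : Fin d → ℝ | z j = z k} with hN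
  have hnull : volume N = 0 := by
    refine measure_iUnion_null fun j => measure_iUnion_null fun k =>
      measure_iUnion_null fun hjk => ?_
    have hsub : {z : Fin d → ℝ | z j = z k} =
        (LinearMap.ker ((LinearMap.proj j : (Fin d → ℝ) →ₗ[ℝ] ℝ) - LinearMap.proj k) :
          Set (Fin d → ℝ)) := by
      ext z
      simp [LinearMap.mem_ker, LinearMap.sub_apply, LinearMap.proj_apply, sub_eq_zero]
    rw [hsub]
    refine Measure.addHaar_submodule _ _ fun htop => ?_
    have hmem : (Pi.single j 1 : Fin d → ℝ) ∈
        LinearMap.ker ((LinearMap.proj j : (Fin d → ℝ) →ₗ[ℝ] ℝ) - LinearMap.proj k) := by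
      rw [htop]; trivial
    simp only [LinearMap.mem_ker, LinearMap.sub_apply, LinearMap.proj_apply,
      Pi.single_eq_same, Pi.single_eq_of_ne (Ne.symm hjk), sub_zero] at hmem
    exact one_ne_zero hmem
  refine Filter.eventuallyEq_of_mem (s := Nᶜ) (MeasureTheory.mem_ae_iff.mpr ?_) ?_
  · rw [compl_compl]; exact hnull
  · intro z hz
    simp only [Set.mem_compl_iff, hN, Set.mem_iUnion] at hz
    push_neg at hz
    by_cases hex : ∃ i, 0 < z i
    · obtain ⟨j₀, hj₀⟩ := Finite.exists_max z
      have hsup : (⨆ k, z k) = z j₀ :=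
        le_antisymm (ciSup_le hj₀) (le_ciSup (Set.Finite.bddAbove (Set.finite_range z)) j₀)
      have hj₀pos : 0 < z j₀ := lt_of_lt_of_le hex.choose_spec (hj₀ hex.choose)
      have hsum : ∑ j : Fin d, H fS j z = H fS j₀ z := by
        refine Finset.sum_eq_single j₀ (fun j _ hne => ?_) (fun h => absurd (Finset.mem_univ _) h)
        have : ¬(0 < z j ∧ ∀ i, z i ≤ z j) := by
          rintro ⟨-, hall⟩
          exact hz j j₀ hne (le_antisymm (hj₀ j) (hall j₀))
        simp only [H, if_neg this]
      simp only []
      show (∑ j : Fin d, H fS j z) = _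
      rw [hsum]
      simp only [if_pos hex, hsup]
      simp only [H]
      rw [if_pos (⟨hj₀pos, hj₀⟩ : 0 < z j₀ ∧ ∀ i, z i ≤ z j₀)]
    · have h0 : ∀ j : Fin d, H fS j z = 0 := by
        intro j
        push_neg at hex
        have : ¬(0 < z j ∧ ∀ i, z i ≤ z j) := fun hc => absurd hc.1 (not_lt.mpr (hex j))
        simp only [H, if_neg this]
      show (∑ j : Fin d, H fS j z) = _
      rw [Finset.sum_congr rfl fun j _ => h0 j, Finset.sum_const_zero]
      simp only [if_neg hex]

end GP

/-- Let `S` be a spectral random vector supported on `{s ∈ ℝ^d : max s = 0}` with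
density `f_S` with respect to the `(d-1)`-dimensional Lebesgue measure on that set,
and let `E ∼ Exp(1)` be independent of `S`. Then `Z = S + E` has `d`-dimensional
Lebesgue density `h(z) = 1(z ≰ 0) f_S(z - max z) e^{-max z}`. -/
theorem gp_density_of_spectral_density
    {Ω : Type*} [MeasurableSpace Ω] (μ : Measure Ω) [IsProbabilityMeasure μ]
    {d : ℕ} (hd : 0 < d)
    (S : Ω → Fin d → ℝ) (E : Ω → ℝ)
    (hSmeas : Measurable S) (hEmeas : Measurable E)
    (hSle : ∀ ω j, S ω j ≤ 0)
    (hSmax : ∀ ω, (⨆ j, S ω j) = 0)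
    (fS : (Fin d → ℝ) → ℝ≥0∞) (hfS : Measurable fS)
    (hdens : μ.map S = (faceMeasure d).withDensity fS)
    (hE : ∀ t : ℝ, 0 ≤ t → μ {ω | t < E ω} = ENNReal.ofReal (Real.exp (-t)))
    (hindep : ProbabilityTheory.IndepFun S E μ) :
    μ.map (fun ω => fun j => S ω j + E ω) =
      volume.withDensity (fun z =>
        if ∃ j, 0 < z j then
          fS (fun j => z j - ⨆ k, z k) * ENNReal.ofReal (Real.exp (-(⨆ k, z k)))
        else 0) := by
  classical
  have hgmeas : Measurable (fun p : (Fin d → ℝ) × ℝ => (fun j => p.1 j + p.2 : Fin d → ℝ)) :=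
    measurable_pi_lambda _ fun j => ((measurable_pi_apply j).comp measurable_fst).add
      measurable_snd
  have hjoint : μ.map (fun ω => (S ω, E ω)) = (μ.map S).prod (μ.map E) :=
    (ProbabilityTheory.indepFun_iff_map_prod_eq_prod_map_map
      hSmeas.aemeasurable hEmeas.aemeasurable).mp hindep
  have hlawE : μ.map E = volume.withDensity GP.eD := GP.law_of_E μ hEmeas hE
  have hface : faceMeasure d
      = ∑ j : Fin d, Measure.map (GP.emb j) (volume.restrict (GP.Q j)) := rfl
  have hlawS : μ.map S
      = ∑ j : Fin d, Measure.map (GP.emb j) (volume.withDensity (GP.fD fS j)) := by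
    rw [hdens, hface, GP.withDensity_finset_sum]
    refine Finset.sum_congr rfl fun j _ => ?_
    rw [GP.withDensity_map_comm _ (GP.measurable_emb j) hfS,
      ← withDensity_indicator (GP.measurableSet_Q j)]
    rfl
  haveI hfinS : IsProbabilityMeasure (μ.map S) := Measure.isProbabilityMeasure_map hSmeas.aemeasurable
  haveI hfinE : IsProbabilityMeasure (μ.map E) := Measure.isProbabilityMeasure_map hEmeas.aemeasurable
  haveI hfin_eD : IsFiniteMeasure (volume.withDensity GP.eD) := by
    rw [← hlawE]; infer_instance
  have hfinD : ∀ j : Fin d, IsFiniteMeasure (volume.withDensity (GP.fD fS j)) := by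
    intro j
    constructor
    have h1 : volume.withDensity (GP.fD fS j) Set.univ
        = Measure.map (GP.emb j) (volume.withDensity (GP.fD fS j)) Set.univ := by
      rw [Measure.map_apply (GP.measurable_emb j) MeasurableSet.univ, Set.preimage_univ]
    have h2 : Measure.map (GP.emb j) (volume.withDensity (GP.fD fS j)) Set.univ
        ≤ (μ.map S) Set.univ := by
      rw [hlawS, Measure.finset_sum_apply]
      exact Finset.single_le_sum
        (f := fun k => Measure.map (GP.emb k) (volume.withDensity (GP.fD fS k)) Set.univ)
        (fun _ _ => zero_le) (Finset.mem_univ j)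
    rw [h1]
    exact lt_of_le_of_lt (h2.trans_eq measure_univ) ENNReal.one_lt_top
  have h0 : μ.map (fun ω => fun j => S ω j + E ω)
      = Measure.map (fun p : (Fin d → ℝ) × ℝ => (fun j => p.1 j + p.2 : Fin d → ℝ))
          (μ.map (fun ω => (S ω, E ω))) := by
    rw [Measure.map_map hgmeas (hSmeas.prodMk hEmeas)]
    rfl
  rw [h0, hjoint, hlawS, hlawE]
  haveI : IsFiniteMeasure
      (∑ j : Fin d, Measure.map (GP.emb j) (volume.withDensity (GP.fD fS j))) := by
    rw [← hlawS]; infer_instance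
  rw [GP.finset_sum_prod, GP.map_finset_sum _ _ hgmeas]
  have key : ∀ j : Fin d,
      Measure.map (fun p : (Fin d → ℝ) × ℝ => (fun j => p.1 j + p.2 : Fin d → ℝ))
        ((Measure.map (GP.emb j) (volume.withDensity (GP.fD fS j))).prod
          (volume.withDensity GP.eD))
      = volume.withDensity (GP.H fS j) := by
    intro j
    haveI := hfinD j
    rw [show volume.withDensity GP.eD = Measure.map id (volume.withDensity GP.eD) from
      (Measure.map_id).symm]
    rw [Measure.map_prod_map _ _ (GP.measurable_emb j) measurable_id]
    rw [Measure.map_map hgmeas ((GP.measurable_emb j).prodMap measurable_id)]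
    have hcomp : (fun p : (Fin d → ℝ) × ℝ => (fun j => p.1 j + p.2 : Fin d → ℝ))
        ∘ Prod.map (GP.emb j) id = GP.Tmap j := by
      funext p
      funext i
      by_cases h : i = j <;> simp [GP.Tmap, GP.emb, Prod.map, h]
    rw [hcomp]
    rw [GP.prod_withDensity volume volume (GP.measurable_fD hfS j) GP.measurable_eD]
    have hFH : (fun p : ({k : Fin d // k ≠ j} → ℝ) × ℝ => GP.fD fS j p.1 * GP.eD p.2)
        = GP.H fS j ∘ GP.Tmap j := funext (GP.fD_eD_eq fS j)
    rw [hFH]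
    rw [← GP.withDensity_map_comm (volume.prod volume) (GP.measurable_Tmap j)
      (GP.measurable_H hfS j)]
    rw [(GP.measurePreserving_Tmap j).map_eq]
  rw [Finset.sum_congr rfl fun j _ => key j]
  rw [← GP.withDensity_sum_fun volume Finset.univ _ (fun j => GP.measurable_H hfS j)]
  exact withDensity_congr_ae (GP.sum_H_ae hd fS)
end

section
/- Let $T$ be a random vector in $\mathbb{R}^d$ with Lebesgue density $f_T$, and $E \sim \mathrm{Exp}(1)$ independent of $T$. Then $Z = T - \max(T) + E$ has Lebesgue density $h(z) = \mathbf{1}(z \not\le 0) \, e^{-\max(z)} \int_0^\infty f_T(z + \log t) \, t^{-1} \, dt$, where $z + \log t$ adds the scalar $\log t$ to every component. -/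
open MeasureTheory
open scoped Classical ENNReal

section AuxGPT

set_option linter.unusedSectionVars false
open Real Set


lemma lint_exp_Ioi (c : ℝ) : ∫⁻ x in Set.Ioi c, ENNReal.ofReal (Real.exp (-x)) = ENNReal.ofReal (Real.exp (-c)) := by
  rw [← ofReal_integral_eq_lintegral_ofReal]
  · rw [integral_exp_neg_Ioi]
  · exact (exp_neg_integrableOn_Ioi c one_pos).congr_fun (fun x _ => by norm_num) measurableSet_Ioi
  · exact Filter.Eventually.of_forall fun x => (exp_pos _).le

lemma mapE {Ω : Type*} [MeasurableSpace Ω] (μ : Measure Ω) [IsProbabilityMeasure μ]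
    (E : Ω → ℝ) (hEmeas : Measurable E)
    (hE : ∀ t : ℝ, 0 ≤ t → μ {ω | t < E ω} = ENNReal.ofReal (Real.exp (-t))) :
    μ.map E = volume.withDensity ((Set.Ioi (0:ℝ)).indicator fun e => ENNReal.ofReal (Real.exp (-e))) := by
  set GE := (Set.Ioi (0:ℝ)).indicator fun e => ENNReal.ofReal (Real.exp (-e)) with hGE
  have hIoi : ∀ a : ℝ, (volume.withDensity GE) (Set.Ioi a) = ENNReal.ofReal (Real.exp (-(0 ⊔ a))) := by
    intro a
    rw [withDensity_apply _ measurableSet_Ioi, hGE, lintegral_indicator measurableSet_Ioi,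
      Measure.restrict_restrict measurableSet_Ioi, Set.Ioi_inter_Ioi, lint_exp_Ioi]
  have huniv : (volume.withDensity GE) Set.univ = 1 := by
    rw [withDensity_apply _ MeasurableSet.univ, Measure.restrict_univ, hGE,
      lintegral_indicator measurableSet_Ioi]
    simpa using lint_exp_Ioi 0
  haveI : IsProbabilityMeasure (μ.map E) := Measure.isProbabilityMeasure_map hEmeas.aemeasurable
  refine ext_of_generate_finite (Set.range Set.Ioi)
    (BorelSpace.measurable_eq.trans (borel_eq_generateFrom_Ioi ℝ)) isPiSystem_Ioi ?_ ?_
  · rintro s ⟨a, rfl⟩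
    rw [Measure.map_apply hEmeas measurableSet_Ioi, hIoi]
    have hpre : E ⁻¹' Set.Ioi a = {ω | a < E ω} := rfl
    rcases le_or_gt 0 a with ha | ha
    · rw [hpre, hE a ha, sup_eq_right.2 ha]
    · rw [sup_eq_left.2 ha.le]
      have h1 : μ {ω | (0:ℝ) < E ω} = 1 := by simpa using hE 0 le_rfl
      have hle : μ {ω | (0:ℝ) < E ω} ≤ μ (E ⁻¹' Set.Ioi a) :=
        measure_mono fun ω hω => lt_trans ha hω
      have hub : μ (E ⁻¹' Set.Ioi a) ≤ 1 := prob_le_one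
      simp only [neg_zero, Real.exp_zero, ENNReal.ofReal_one]
      exact le_antisymm hub (h1 ▸ hle)
  · rw [measure_univ, huniv]


lemma wd_prod {α β : Type*} [MeasurableSpace α] [MeasurableSpace β]
    (μ : Measure α) (ν : Measure β) [SigmaFinite μ] [SigmaFinite ν]
    {f : α → ℝ≥0∞} {g : β → ℝ≥0∞} (hf : Measurable f) (hg : Measurable g)
    [SigmaFinite (μ.withDensity f)] [SigmaFinite (ν.withDensity g)] :
    (μ.withDensity f).prod (ν.withDensity g) =
      (μ.prod ν).withDensity (fun p => f p.1 * g p.2) := by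
  refine Measure.prod_eq (μν := (μ.prod ν).withDensity (fun p => f p.1 * g p.2))
    (fun s t hs ht => ?_)
  rw [withDensity_apply _ (hs.prod ht), ← Measure.prod_restrict,
    lintegral_prod_mul hf.aemeasurable hg.aemeasurable,
    withDensity_apply _ hs, withDensity_apply _ ht]


section KeyGPT
variable {d : ℕ} [NeZero d]

private lemma sup_shift (z : Fin d → ℝ) (c : ℝ) : (⨆ k, (z k + c)) = (⨆ k, z k) + c := by
  obtain ⟨i, hi⟩ := exists_eq_ciSup_of_finite (f := z)
  apply le_antisymm
  · exact ciSup_le fun k => (by have := le_ciSup (Set.Finite.bddAbove (Set.finite_range z)) k; linarith)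
  · calc (⨆ k, z k) + c = z i + c := by rw [hi]
      _ ≤ ⨆ k, (z k + c) := le_ciSup (Set.Finite.bddAbove (Set.finite_range (fun k => z k + c))) i

private lemma hM : Measurable (fun z : Fin d → ℝ => ⨆ k, z k) :=
  Measurable.iSup (fun i => measurable_pi_apply i)

private lemma key (F : (Fin d → ℝ) → ℝ≥0∞) (hF : Measurable F)
    (G : (Fin d → ℝ) → ℝ≥0∞) (hG : Measurable G) :
    ∫⁻ t, ∫⁻ e, G (fun j => t j - (⨆ k, t k) + e) *
        (F t * (if 0 < e then ENNReal.ofReal (Real.exp (-e)) else 0)) =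
    ∫⁻ z, G z * ((if 0 < ⨆ k, z k then ENNReal.ofReal (Real.exp (-(⨆ k, z k))) else 0) *
        ∫⁻ r, F (fun j => z j + r)) := by
  set M : (Fin d → ℝ) → ℝ := fun z => ⨆ k, z k with hMdef
  set c : (Fin d → ℝ) → ℝ≥0∞ :=
    fun z => G z * (if 0 < M z then ENNReal.ofReal (Real.exp (-(M z))) else 0) with hcdef
  have hc : Measurable c := by
    apply hG.mul
    apply Measurable.ite (measurableSet_lt measurable_const hM) _ measurable_const
    exact ((hM.neg).exp).ennreal_ofReal
  -- measurable family used in several swaps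
  have hFshift : Measurable (fun p : (Fin d → ℝ) × ℝ => F (fun j => p.1 j + p.2)) :=
    hF.comp (measurable_pi_lambda _ fun j =>
      ((measurable_pi_apply j).comp measurable_fst).add measurable_snd)
  have hcshift : Measurable (fun p : (Fin d → ℝ) × ℝ => c (fun j => p.1 j - p.2)) :=
    hc.comp (measurable_pi_lambda _ fun j =>
      ((measurable_pi_apply j).comp measurable_fst).sub measurable_snd)
  -- RHS rewrite
  have hR : ∀ z, G z * ((if 0 < M z then ENNReal.ofReal (Real.exp (-(M z))) else 0) *
      ∫⁻ r, F (fun j => z j + r)) = ∫⁻ r, c z * F (fun j => z j + r) := by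
    intro z
    rw [lintegral_const_mul (c z) (f := fun r => F (fun j => z j + r))
      (hFshift.comp measurable_prodMk_left)]
    ring
  symm
  calc
    ∫⁻ z, G z * ((if 0 < ⨆ k, z k then ENNReal.ofReal (Real.exp (-(⨆ k, z k))) else 0) *
        ∫⁻ r, F (fun j => z j + r))
      = ∫⁻ z, ∫⁻ r, c z * F (fun j => z j + r) := lintegral_congr hR
    _ = ∫⁻ r, ∫⁻ z, c z * F (fun j => z j + r) := by
        exact lintegral_lintegral_swap ((hc.comp measurable_fst).mul hFshift).aemeasurable
    _ = ∫⁻ r, ∫⁻ t, c (fun j => t j - r) * F t := by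
        refine lintegral_congr fun r => ?_
        have hmp := measurePreserving_add_right (volume : Measure (Fin d → ℝ)) (fun _ => -r)
        have := hmp.lintegral_comp (f := fun z => c z * F (fun j => z j + r))
          ((hc.mul (hF.comp (measurable_pi_lambda _ fun j =>
            (measurable_pi_apply j).add measurable_const))))
        rw [← this]
        refine lintegral_congr fun t => ?_
        have h1 : (fun j => (t + (fun _ : Fin d => -r)) j + r) = t := by
          funext j; simp
        have h2 : (t + (fun _ : Fin d => -r)) = (fun j => t j - r) := by
          funext j; simp [sub_eq_add_neg]
        rw [h1, h2]
    _ = ∫⁻ t, ∫⁻ r, c (fun j => t j - r) * F t := by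
        refine (lintegral_lintegral_swap ?_).symm
        exact (hcshift.mul (hF.comp measurable_fst)).aemeasurable
    _ = ∫⁻ t, (∫⁻ r, c (fun j => t j - r)) * F t := by
        refine lintegral_congr fun t => ?_
        exact lintegral_mul_const (F t) (hcshift.comp measurable_prodMk_left)
    _ = ∫⁻ t, (∫⁻ e, c (fun j => t j - (M t - e))) * F t := by
        refine lintegral_congr fun t => ?_
        congr 1
        have hmp := Measure.measurePreserving_sub_left (volume : Measure ℝ) (M t)
        exact (hmp.lintegral_comp (f := fun r => c (fun j => t j - r))
          (hcshift.comp measurable_prodMk_left)).symm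
    _ = ∫⁻ t, ∫⁻ e, G (fun j => t j - (⨆ k, t k) + e) *
        (F t * (if 0 < e then ENNReal.ofReal (Real.exp (-e)) else 0)) := by
        refine lintegral_congr fun t => ?_
        have hpt : ∀ e : ℝ, c (fun j => t j - (M t - e)) =
            G (fun j => t j - (⨆ k, t k) + e) *
              (if 0 < e then ENNReal.ofReal (Real.exp (-e)) else 0) := by
          intro e
          have harg : (fun j => t j - (M t - e)) = (fun j => t j - (⨆ k, t k) + e) := by
            funext j; simp only [hMdef]; ring
          have hMe : M (fun j => t j - (⨆ k, t k) + e) = e := by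
            have h' : (fun k => t k - (⨆ k, t k) + e) = fun k => t k + (e - (⨆ k, t k)) :=
              funext fun k => by ring
            show (⨆ k, (t k - (⨆ k, t k) + e)) = e
            rw [show (fun k => t k - (⨆ k, t k) + e) = fun k => t k + (e - (⨆ k, t k)) from h',
              sup_shift]
            ring
          rw [hcdef]
          simp only [harg, hMe]
        have hG1 : Measurable fun e : ℝ => G (fun j => t j - (⨆ k, t k) + e) :=
          hG.comp (measurable_pi_lambda _ fun j => measurable_const.add measurable_id)
        have hite : Measurable fun e : ℝ =>
            (if 0 < e then ENNReal.ofReal (Real.exp (-e)) else 0 : ℝ≥0∞) :=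
          Measurable.ite (measurableSet_lt measurable_const measurable_id)
            (measurable_id.neg.exp.ennreal_ofReal) measurable_const
        have hX : Measurable (fun e : ℝ => G (fun j => t j - (⨆ k, t k) + e) *
            (if 0 < e then ENNReal.ofReal (Real.exp (-e)) else 0)) := hG1.mul hite
        rw [lintegral_congr hpt, ← lintegral_mul_const _ hX]
        refine lintegral_congr fun e => ?_
        ring

private lemma log_subst {d : ℕ} (fT : (Fin d → ℝ) → ℝ) (z : Fin d → ℝ) :
    (∫ r : ℝ, fT (fun j => z j + r)) =
      ∫ t in Set.Ioi (0:ℝ), fT (fun j => z j + Real.log t) / t := by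
  have himg : Real.log '' Set.Ioi 0 = Set.univ := by
    ext y
    simp only [Set.mem_image, Set.mem_Ioi, Set.mem_univ, iff_true]
    exact ⟨Real.exp y, Real.exp_pos y, Real.log_exp y⟩
  have hderiv : ∀ x ∈ Set.Ioi (0:ℝ), HasDerivWithinAt Real.log x⁻¹ (Set.Ioi 0) x :=
    fun x hx => (Real.hasDerivAt_log (ne_of_gt hx)).hasDerivWithinAt
  have hinj : Set.InjOn Real.log (Set.Ioi 0) := fun a ha b hb h => by
    rw [← Real.exp_log ha, ← Real.exp_log hb, h]
  have hsub := integral_image_eq_integral_abs_deriv_smul measurableSet_Ioi hderiv hinj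
    (fun r => fT (fun j => z j + r))
  rw [himg, MeasureTheory.setIntegral_univ] at hsub
  rw [hsub]
  refine MeasureTheory.setIntegral_congr_fun measurableSet_Ioi fun t ht => ?_
  have ht0 : (0:ℝ) < t := ht
  rw [abs_of_pos (inv_pos.mpr ht0), smul_eq_mul, inv_mul_eq_div]


end KeyGPT
end AuxGPT

/-- Let `T` be a random vector in `ℝ^d` with Lebesgue density `f_T` and `E ∼ Exp(1)`
independent of `T`. Then `Z = T - max T + E` has Lebesgue density
`h(z) = 1(z ≰ 0) e^{-max z} ∫_0^∞ f_T(z + log t) t⁻¹ dt`. -/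
theorem gpT_density
    {Ω : Type*} [MeasurableSpace Ω] (μ : Measure Ω) [IsProbabilityMeasure μ]
    {d : ℕ} (hd : 0 < d)
    (T : Ω → Fin d → ℝ) (E : Ω → ℝ)
    (hTmeas : Measurable T) (hEmeas : Measurable E)
    (fT : (Fin d → ℝ) → ℝ) (hfT : Measurable fT) (hfTnn : ∀ t, 0 ≤ fT t)
    (hdens : μ.map T = volume.withDensity (fun t => ENNReal.ofReal (fT t)))
    (hE : ∀ t : ℝ, 0 ≤ t → μ {ω | t < E ω} = ENNReal.ofReal (Real.exp (-t)))
    (hindep : ProbabilityTheory.IndepFun T E μ) :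
    μ.map (fun ω => fun j => T ω j - (⨆ k, T ω k) + E ω) =
      volume.withDensity (fun z =>
        if ∃ j, 0 < z j then
          ENNReal.ofReal (Real.exp (-(⨆ k, z k)) *
            ∫ t in Set.Ioi (0 : ℝ), fT (fun j => z j + Real.log t) / t)
        else 0) := by
  haveI : NeZero d := ⟨hd.ne'⟩
  set F : (Fin d → ℝ) → ℝ≥0∞ := fun t => ENNReal.ofReal (fT t) with hFdef
  have hF : Measurable F := hfT.ennreal_ofReal
  set GE := (Set.Ioi (0:ℝ)).indicator fun e => ENNReal.ofReal (Real.exp (-e)) with hGEdef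
  have hGEmeas : Measurable GE :=
    (measurable_id.neg.exp.ennreal_ofReal).indicator measurableSet_Ioi
  have hmapE : μ.map E = volume.withDensity GE := mapE μ E hEmeas hE
  haveI hPF : IsProbabilityMeasure (volume.withDensity F) :=
    hdens ▸ Measure.isProbabilityMeasure_map hTmeas.aemeasurable
  haveI hPG : IsProbabilityMeasure (volume.withDensity GE) :=
    hmapE ▸ Measure.isProbabilityMeasure_map hEmeas.aemeasurable
  have hjoint : μ.map (fun ω => (T ω, E ω)) =
      ((volume : Measure (Fin d → ℝ)).prod (volume : Measure ℝ)).withDensity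
        (fun p => F p.1 * GE p.2) := by
    rw [(ProbabilityTheory.indepFun_iff_map_prod_eq_prod_map_map hTmeas.aemeasurable
      hEmeas.aemeasurable).mp hindep, hdens, hmapE]
    exact wd_prod _ _ hF hGEmeas
  set φ : ((Fin d → ℝ) × ℝ) → (Fin d → ℝ) :=
    fun p => fun j => p.1 j - (⨆ k, p.1 k) + p.2 with hφdef
  have hφ : Measurable φ := measurable_pi_lambda _ fun j =>
    (((measurable_pi_apply j).comp measurable_fst).sub (hM.comp measurable_fst)).add
      measurable_snd
  have hcomp : μ.map (fun ω => fun j => T ω j - (⨆ k, T ω k) + E ω) =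
      (μ.map (fun ω => (T ω, E ω))).map φ := by
    rw [Measure.map_map hφ (hTmeas.prodMk hEmeas)]
    rfl
  set L : (Fin d → ℝ) → ℝ≥0∞ := fun z => ∫⁻ r, F (fun j => z j + r) with hLdef
  have hLmeas : Measurable L := by
    have : Measurable fun p : (Fin d → ℝ) × ℝ => F (fun j => p.1 j + p.2) :=
      hF.comp (measurable_pi_lambda _ fun j =>
        ((measurable_pi_apply j).comp measurable_fst).add measurable_snd)
    exact this.lintegral_prod_right'
  set H : (Fin d → ℝ) → ℝ≥0∞ := fun z =>
    (if 0 < ⨆ k, z k then ENNReal.ofReal (Real.exp (-(⨆ k, z k))) else 0) * L z with hHdef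
  have hHmeas : Measurable H :=
    (Measurable.ite (measurableSet_lt measurable_const hM)
      (hM.neg.exp.ennreal_ofReal) measurable_const).mul hLmeas
  have hstep5 : (((volume : Measure (Fin d → ℝ)).prod (volume : Measure ℝ)).withDensity
      (fun p => F p.1 * GE p.2)).map φ = volume.withDensity H := by
    refine Measure.ext fun s hs => ?_
    rw [Measure.map_apply hφ hs, withDensity_apply _ (hφ hs), withDensity_apply _ hs,
      ← lintegral_indicator (hφ hs), ← lintegral_indicator hs]
    have hGmeas : Measurable (s.indicator (1 : (Fin d → ℝ) → ℝ≥0∞)) :=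
      measurable_one.indicator hs
    have h1 : ∀ p : (Fin d → ℝ) × ℝ, (φ ⁻¹' s).indicator (fun p => F p.1 * GE p.2) p =
        (s.indicator 1 (φ p)) * (F p.1 * GE p.2) := by
      intro p
      by_cases hp : φ p ∈ s <;> simp [Set.indicator_apply, hp]
    rw [lintegral_congr h1,
      lintegral_prod (fun p : (Fin d → ℝ) × ℝ => s.indicator 1 (φ p) * (F p.1 * GE p.2))
        (((hGmeas.comp hφ).mul
          ((hF.comp measurable_fst).mul (hGEmeas.comp measurable_snd))).aemeasurable)]
    have h2 : (∫⁻ t, ∫⁻ e, (s.indicator 1 (φ (t, e))) * (F t * GE e)) =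
        ∫⁻ t, ∫⁻ e, (s.indicator (1 : (Fin d → ℝ) → ℝ≥0∞))
            (fun j => t j - (⨆ k, t k) + e) *
          (F t * (if 0 < e then ENNReal.ofReal (Real.exp (-e)) else 0)) := by
      refine lintegral_congr fun t => lintegral_congr fun e => ?_
      rw [hGEdef]
      simp [Set.indicator_apply, Set.mem_Ioi, hφdef]
    rw [h2, key F hF _ hGmeas]
    refine lintegral_congr fun z => ?_
    by_cases hz : z ∈ s <;> simp [Set.indicator_apply, hz, hHdef, hLdef]
  have hmain : μ.map (fun ω => fun j => T ω j - (⨆ k, T ω k) + E ω) =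
      volume.withDensity H := by
    rw [hcomp, hjoint, hstep5]
  rw [hmain]
  -- a.e. identification of the density
  haveI hPH : IsProbabilityMeasure (volume.withDensity H) := hmain ▸
    Measure.isProbabilityMeasure_map (measurable_pi_lambda _ fun j =>
      (((measurable_pi_apply j).comp hTmeas).sub (hM.comp hTmeas)).add hEmeas).aemeasurable
  have hint1 : ∫⁻ z, H z = 1 := by
    have := measure_univ (μ := volume.withDensity H)
    rwa [withDensity_apply _ MeasurableSet.univ, Measure.restrict_univ] at this
  have hfin : ∀ᵐ z : Fin d → ℝ, H z ≠ ∞ := by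
    have := ae_lt_top hHmeas (by rw [hint1]; exact ENNReal.one_ne_top)
    filter_upwards [this] with z hz using hz.ne
  refine withDensity_congr_ae ?_
  filter_upwards [hfin] with z hz
  by_cases hex : ∃ j, 0 < z j
  · have hbdd : BddAbove (Set.range z) := Set.Finite.bddAbove (Set.finite_range z)
    have hpos : 0 < ⨆ k, z k := (lt_ciSup_iff hbdd).mpr hex
    have hHz : H z = ENNReal.ofReal (Real.exp (-(⨆ k, z k))) * L z := by
      rw [hHdef]; simp [hpos]
    have hLfin : L z ≠ ∞ := by
      intro hLtop
      apply hz
      rw [hHz, hLtop, ENNReal.mul_top]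
      simp [Real.exp_pos]
    have hgmeas : Measurable fun r : ℝ => fT (fun j => z j + r) :=
      hfT.comp (measurable_pi_lambda _ fun j => measurable_const.add measurable_id)
    have hgnn : (0:ℝ→ℝ) ≤ᵐ[volume] fun r => fT (fun j => z j + r) :=
      Filter.Eventually.of_forall fun r => hfTnn _
    have hint : Integrable (fun r : ℝ => fT (fun j => z j + r)) := by
      refine ⟨hgmeas.aestronglyMeasurable, ?_⟩
      rw [hasFiniteIntegral_iff_ofReal hgnn]
      exact lt_top_iff_ne_top.mpr hLfin
    have hLz : ENNReal.ofReal (∫ r : ℝ, fT (fun j => z j + r)) = L z :=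
      ofReal_integral_eq_lintegral_ofReal hint hgnn
    rw [hHz]
    simp only [hex, if_true]
    rw [← log_subst fT z, ENNReal.ofReal_mul (Real.exp_nonneg _), hLz]
  · have hpos : ¬ (0 < ⨆ k, z k) := by
      rw [lt_ciSup_iff (Set.Finite.bddAbove (Set.finite_range z))]
      exact hex
    rw [hHdef]
    simp [hpos, hex]
end

section
/- Let $d \ge 1$, $m \ge 1$, $\gamma \ne 0$, $\sigma \in (0,\infty)^d$, and $A \in [0,\infty)^{m \times d}$ with every row $A_i$ satisfying $A_i \sigma > 0$. Let $S$ be a spectral random vector and $E \sim \mathrm{Exp}(1)$ independent of $S$, and set $X_j = \sigma_j(e^{\gamma(S_j+E)}-1)/\gamma$. Then for $x \in \mathbb{R}^m$ with $A_i\sigma + \gamma x_i > 0$ for all $i$: $P[AX \not\le x] = E\left[\min\Big(1, \max_{i=1,\ldots,m} (1+\gamma x_i/A_i\sigma)^{-1/\gamma} e^{U_i}\Big)\right]$, where $U_i = \gamma^{-1}\log\big(\sum_{j=1}^d p_{ij} e^{\gamma S_j}\big)$ with $p_{ij} = a_{ij}\sigma_j / A_i\sigma$. -/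
open MeasureTheory ProbabilityTheory
open scoped ENNReal

private lemma ereal_neg_iInf {ι : Sort*} (f : ι → EReal) : -(⨅ i, f i) = ⨆ i, -(f i) := by
  apply le_antisymm
  · rw [EReal.neg_le]
    exact le_iInf fun i => EReal.neg_le.mp (le_iSup (fun i => -f i) i)
  · exact iSup_le fun i => EReal.neg_le_neg_iff.mpr (iInf_le f i)

private lemma ereal_coe_sum {ι : Type*} (s : Finset ι) (f : ι → ℝ) :
    ((∑ j ∈ s, f j : ℝ) : EReal) = ∑ j ∈ s, ((f j : ℝ) : EReal) :=
  map_sum (⟨⟨Real.toEReal, EReal.coe_zero⟩, EReal.coe_add⟩ : ℝ →+ EReal) f s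

private lemma ereal_sum_eq_bot {ι : Type*} {s : Finset ι} {f : ι → EReal} {j : ι}
    (hj : j ∈ s) (h : f j = ⊥) : ∑ i ∈ s, f i = ⊥ := by
  classical
  rw [← Finset.add_sum_erase s f hj, h, EReal.bot_add]

private lemma term_real (γ σj αj e sr : ℝ) :
    (αj : EReal) * ((σj : EReal) *
        (((EReal.exp ((γ : EReal) * ((sr : EReal) + (e : EReal)))) : EReal) - 1) *
        ((γ⁻¹ : ℝ) : EReal)) =
      ((αj * (σj * (Real.exp (γ * sr) * Real.exp (γ * e) - 1) * γ⁻¹) : ℝ) : EReal) := by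
  rw [← EReal.coe_add, ← EReal.coe_mul, EReal.exp_coe,
    EReal.coe_ennreal_ofReal, max_eq_left (Real.exp_pos _).le, ← Real.exp_add, ← mul_add]
  norm_cast

private lemma exp_coe_mul_coe (γ sr : ℝ) :
    EReal.exp ((γ : EReal) * (sr : EReal)) = ENNReal.ofReal (Real.exp (γ * sr)) := by
  rw [← EReal.coe_mul, EReal.exp_coe]

/-- Core pointwise equivalence. -/
private lemma aux_core {d : ℕ} {γ : ℝ} (hγ : γ ≠ 0) {σ : Fin d → ℝ} (hσ : ∀ j, 0 < σ j)
    {α : Fin d → ℝ} (hα : ∀ j, 0 ≤ α j) (hb : 0 < ∑ j, α j * σ j)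
    {s : Fin d → EReal} (hs : ∀ j, s j ≤ 0) (e xi : ℝ)
    (hv : 0 < (∑ j, α j * σ j) + γ * xi) :
    ((xi : EReal) < ∑ j, (α j : EReal) *
        ((σ j : EReal) * (((EReal.exp ((γ : EReal) * (s j + (e : EReal)))) : EReal) - 1) *
          ((γ⁻¹ : ℝ) : EReal)))
      ↔ (((-e : ℝ)) : EReal) < ((γ⁻¹ : ℝ) : EReal) *
          ENNReal.log (∑ j, ENNReal.ofReal (α j * σ j / ∑ k, α k * σ k) *
            EReal.exp ((γ : EReal) * s j)) +
          ((-(γ⁻¹ * Real.log (1 + γ * xi / ∑ j, α j * σ j)) : ℝ) : EReal) := by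
  set b := ∑ j, α j * σ j with hbdef
  have hb' : b ≠ 0 := ne_of_gt hb
  set v := 1 + γ * xi / b with hvdef
  have hbv : b * v = b + γ * xi := by
    rw [hvdef, mul_add, mul_one, mul_div_assoc', mul_comm b, mul_div_assoc, div_self hb', mul_one]
  have hvpos : 0 < v := by
    have : v = (b + γ * xi) / b := by field_simp [hvdef]; linarith [hbv]
    rw [this]; exact div_pos hv hb
  set Eγ := Real.exp (γ * e) with hEγdef
  have hEγ : 0 < Eγ := Real.exp_pos _
  have hsreal : ∀ j, s j ≠ ⊥ → s j = ((s j).toReal : EReal) := by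
    intro j hj
    exact (EReal.coe_toReal (lt_of_le_of_lt (hs j) (by norm_num)).ne hj).symm
  rcases hγ.lt_or_gt with hneg | hpos
  · -- γ < 0
    by_cases hbot : ∃ j, α j ≠ 0 ∧ s j = ⊥
    · obtain ⟨j0, hj0a, hj0s⟩ := hbot
      have hα0 : 0 < α j0 := (hα j0).lt_of_ne' hj0a
      have hLHS : (∑ j, (α j : EReal) *
          ((σ j : EReal) * (((EReal.exp ((γ : EReal) * (s j + (e : EReal)))) : EReal) - 1) *
            ((γ⁻¹ : ℝ) : EReal))) = ⊥ := by
        refine ereal_sum_eq_bot (Finset.mem_univ j0) ?_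
        rw [hj0s, EReal.bot_add, EReal.coe_mul_bot_of_neg hneg, EReal.exp_top,
          EReal.coe_ennreal_top, ← EReal.coe_one, EReal.top_sub_coe,
          EReal.coe_mul_top_of_pos (hσ j0), EReal.top_mul_coe_of_neg (inv_lt_zero.mpr hneg),
          EReal.coe_mul_bot_of_pos hα0]
      have hVtop : (∑ j, ENNReal.ofReal (α j * σ j / b) *
          EReal.exp ((γ : EReal) * s j)) = ⊤ := by
        refine ENNReal.sum_eq_top.mpr ⟨j0, Finset.mem_univ _, ?_⟩
        rw [hj0s, EReal.coe_mul_bot_of_neg hneg, EReal.exp_top,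
          ENNReal.mul_top (ENNReal.ofReal_pos.mpr (div_pos (mul_pos hα0 (hσ j0)) hb)).ne']
      rw [hLHS, hVtop, ENNReal.log_top, EReal.coe_mul_top_of_neg (inv_lt_zero.mpr hneg), EReal.bot_add]
      simp
    · push_neg at hbot
      set r : Fin d → ℝ := fun j => if s j = ⊥ then 1 else Real.exp (γ * (s j).toReal) with hrdef
      have hr0 : ∀ j, 0 ≤ r j := by
        intro j; rw [hrdef]; dsimp only; split
        · norm_num
        · exact (Real.exp_pos _).le
      have hterm : ∀ j, (α j : EReal) *
          ((σ j : EReal) * (((EReal.exp ((γ : EReal) * (s j + (e : EReal)))) : EReal) - 1) *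
            ((γ⁻¹ : ℝ) : EReal)) = ((α j * (σ j * (r j * Eγ - 1) * γ⁻¹) : ℝ) : EReal) := by
        intro j
        by_cases hαj : α j = 0
        · simp [hαj]
        · have hne := hbot j hαj
          rw [hsreal j hne, term_real]
          have : r j = Real.exp (γ * (s j).toReal) := by rw [hrdef]; simp [hne]
          rw [this]
      have hVterm : ∀ j, ENNReal.ofReal (α j * σ j / b) * EReal.exp ((γ : EReal) * s j)
          = ENNReal.ofReal (α j * σ j / b * r j) := by
        intro j
        by_cases hαj : α j = 0
        · simp [hαj]
        · have hne := hbot j hαj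
          have : r j = Real.exp (γ * (s j).toReal) := by rw [hrdef]; simp [hne]
          rw [hsreal j hne, exp_coe_mul_coe, this,
            ← ENNReal.ofReal_mul (div_nonneg (mul_nonneg (hα j) (hσ j).le) hb.le)]
      rw [Finset.sum_congr rfl fun j _ => hterm j, ← ereal_coe_sum,
        Finset.sum_congr rfl fun j _ => hVterm j,
        ← ENNReal.ofReal_sum_of_nonneg fun j _ =>
          mul_nonneg (div_nonneg (mul_nonneg (hα j) (hσ j).le) hb.le) (hr0 j)]
      set R := ∑ j, α j * σ j * r j with hRdef
      have hsum_eq : ∑ j, α j * (σ j * (r j * Eγ - 1) * γ⁻¹) = (Eγ * R - b) / γ := by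
        have h1 : ∀ j, α j * (σ j * (r j * Eγ - 1) * γ⁻¹)
            = Eγ * (α j * σ j * r j) * γ⁻¹ - (α j * σ j) * γ⁻¹ := fun j => by ring
        rw [Finset.sum_congr rfl fun j _ => h1 j, Finset.sum_sub_distrib, ← Finset.sum_mul,
          ← Finset.sum_mul, ← Finset.mul_sum, ← hRdef, ← hbdef, div_eq_mul_inv]
        ring
      have hVsum : ∑ j, α j * σ j / b * r j = R / b := by
        have h1 : ∀ j, α j * σ j / b * r j = α j * σ j * r j / b := fun j => by ring
        rw [Finset.sum_congr rfl fun j _ => h1 j, ← Finset.sum_div]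
      have hRpos : 0 < R := by
        obtain ⟨j1, _, hj1⟩ := Finset.exists_ne_zero_of_sum_ne_zero hb.ne'
        have hαj1 : α j1 ≠ 0 := fun h => hj1 (by simp [h])
        have hrj1 : 0 < r j1 := by
          have : r j1 = Real.exp (γ * (s j1).toReal) := by rw [hrdef]; simp [hbot j1 hαj1]
          rw [this]; exact Real.exp_pos _
        have hterm1 : 0 < α j1 * σ j1 * r j1 :=
          mul_pos (mul_pos ((hα j1).lt_of_ne' hαj1) (hσ j1)) hrj1
        exact lt_of_lt_of_le hterm1 (Finset.single_le_sum
          (fun j _ => mul_nonneg (mul_nonneg (hα j) (hσ j).le) (hr0 j)) (Finset.mem_univ j1))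
      rw [hVsum, hsum_eq, ENNReal.log_ofReal_of_pos (div_pos hRpos hb), ← EReal.coe_mul,
        ← EReal.coe_add, EReal.coe_lt_coe_iff, EReal.coe_lt_coe_iff]
      rw [lt_div_iff_of_neg hneg,
        show γ⁻¹ * Real.log (R / b) + -(γ⁻¹ * Real.log v)
          = (Real.log (R / b) - Real.log v) / γ by field_simp; ring,
        lt_div_iff_of_neg hneg]
      have hlogs : Real.log (R / b) = Real.log R - Real.log b := Real.log_div hRpos.ne' hb'
      have hEqR : Real.log (Eγ * R) = γ * e + Real.log R := by
        rw [Real.log_mul hEγ.ne' hRpos.ne', hEγdef, Real.log_exp]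
      have hbvlog : Real.log (b * v) = Real.log b + Real.log v := Real.log_mul hb' hvpos.ne'
      have key : Eγ * R < b * v ↔ γ * e + Real.log R < Real.log b + Real.log v := by
        rw [← hEqR, ← hbvlog]
        exact (Real.log_lt_log_iff (mul_pos hEγ hRpos) (mul_pos hb hvpos)).symm
      constructor
      · intro H
        have h2 : Eγ * R < b * v := by rw [hbv]; linarith
        have := key.mp h2; linarith
      · intro H
        have h2 : γ * e + Real.log R < Real.log b + Real.log v := by linarith
        have := key.mpr h2
        rw [hbv] at this; linarith
  · -- 0 < γ
    set r : Fin d → ℝ := fun j => if s j = ⊥ then 0 else Real.exp (γ * (s j).toReal) with hrdef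
    have hr0 : ∀ j, 0 ≤ r j := by
      intro j; rw [hrdef]; dsimp only; split
      · norm_num
      · exact (Real.exp_pos _).le
    have hterm : ∀ j, (α j : EReal) *
        ((σ j : EReal) * (((EReal.exp ((γ : EReal) * (s j + (e : EReal)))) : EReal) - 1) *
          ((γ⁻¹ : ℝ) : EReal)) = ((α j * (σ j * (r j * Eγ - 1) * γ⁻¹) : ℝ) : EReal) := by
      intro j
      by_cases hne : s j = ⊥
      · have : r j = 0 := by rw [hrdef]; simp [hne]
        rw [this, hne, EReal.bot_add, EReal.coe_mul_bot_of_pos hpos, EReal.exp_bot,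
          EReal.coe_ennreal_zero]
        rw [show ((0:EReal) - 1) = ((-1:ℝ):EReal) by norm_num,
          show α j * (σ j * (0 * Eγ - 1) * γ⁻¹) = α j * (σ j * (-1) * γ⁻¹) by ring]
        norm_cast
      · have : r j = Real.exp (γ * (s j).toReal) := by rw [hrdef]; simp [hne]
        rw [hsreal j hne, term_real, this]
    have hVterm : ∀ j, ENNReal.ofReal (α j * σ j / b) * EReal.exp ((γ : EReal) * s j)
        = ENNReal.ofReal (α j * σ j / b * r j) := by
      intro j
      by_cases hne : s j = ⊥
      · have : r j = 0 := by rw [hrdef]; simp [hne]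
        rw [this, hne, EReal.coe_mul_bot_of_pos hpos, EReal.exp_bot]
        simp
      · have : r j = Real.exp (γ * (s j).toReal) := by rw [hrdef]; simp [hne]
        rw [hsreal j hne, exp_coe_mul_coe, this,
          ← ENNReal.ofReal_mul (div_nonneg (mul_nonneg (hα j) (hσ j).le) hb.le)]
    rw [Finset.sum_congr rfl fun j _ => hterm j, ← ereal_coe_sum,
      Finset.sum_congr rfl fun j _ => hVterm j,
      ← ENNReal.ofReal_sum_of_nonneg fun j _ =>
        mul_nonneg (div_nonneg (mul_nonneg (hα j) (hσ j).le) hb.le) (hr0 j)]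
    set R := ∑ j, α j * σ j * r j with hRdef
    have hsum_eq : ∑ j, α j * (σ j * (r j * Eγ - 1) * γ⁻¹) = (Eγ * R - b) / γ := by
      have h1 : ∀ j, α j * (σ j * (r j * Eγ - 1) * γ⁻¹)
          = Eγ * (α j * σ j * r j) * γ⁻¹ - (α j * σ j) * γ⁻¹ := fun j => by ring
      rw [Finset.sum_congr rfl fun j _ => h1 j, Finset.sum_sub_distrib, ← Finset.sum_mul,
        ← Finset.sum_mul, ← Finset.mul_sum, ← hRdef, ← hbdef, div_eq_mul_inv]
      ring
    have hVsum : ∑ j, α j * σ j / b * r j = R / b := by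
      have h1 : ∀ j, α j * σ j / b * r j = α j * σ j * r j / b := fun j => by ring
      rw [Finset.sum_congr rfl fun j _ => h1 j, ← Finset.sum_div]
    have hR0 : 0 ≤ R :=
      Finset.sum_nonneg fun j _ => mul_nonneg (mul_nonneg (hα j) (hσ j).le) (hr0 j)
    have hLHSiff : ((xi : EReal) < ((∑ j, α j * (σ j * (r j * Eγ - 1) * γ⁻¹) : ℝ) : EReal))
        ↔ b * v < Eγ * R := by
      rw [EReal.coe_lt_coe_iff, hsum_eq, lt_div_iff₀ hpos, hbv]
      constructor <;> intro h <;> linarith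
    rw [hVsum, hLHSiff]
    rcases hR0.eq_or_lt with hR | hRpos
    · rw [← hR, zero_div, mul_zero, ENNReal.ofReal_zero, ENNReal.log_zero,
        EReal.coe_mul_bot_of_pos (inv_pos.mpr hpos), EReal.bot_add]
      exact iff_of_false (not_lt.mpr (mul_pos hb hvpos).le) not_lt_bot
    · rw [ENNReal.log_ofReal_of_pos (div_pos hRpos hb), ← EReal.coe_mul,
        ← EReal.coe_add, EReal.coe_lt_coe_iff]
      rw [show γ⁻¹ * Real.log (R / b) + -(γ⁻¹ * Real.log v)
          = (Real.log (R / b) - Real.log v) / γ by field_simp; ring,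
        lt_div_iff₀ hpos]
      have hlogs : Real.log (R / b) = Real.log R - Real.log b := Real.log_div hRpos.ne' hb'
      have hEqR : Real.log (Eγ * R) = γ * e + Real.log R := by
        rw [Real.log_mul hEγ.ne' hRpos.ne', hEγdef, Real.log_exp]
      have hbvlog : Real.log (b * v) = Real.log b + Real.log v := Real.log_mul hb' hvpos.ne'
      have key : b * v < Eγ * R ↔ Real.log b + Real.log v < γ * e + Real.log R := by
        rw [← hEqR, ← hbvlog]
        exact (Real.log_lt_log_iff (mul_pos hb hvpos) (mul_pos hEγ hRpos)).symm
      rw [key]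
      constructor <;> intro H <;> linarith

/-- Linear combinations of a GP random vector with equal shape parameters `γ ≠ 0`:
with `X_j = σ_j (e^{γ(S_j+E)} - 1)/γ` for a spectral random vector `S` and independent
unit exponential `E`, and a nonnegative matrix `A` with `A_i σ > 0`, for `x` with
`A_i σ + γ x_i > 0` for all `i`,
`P[AX ≰ x] = E[min(1, max_i (1 + γ x_i / A_i σ)^{-1/γ} e^{U_i})]`
where `U_i = γ⁻¹ log(∑_j p_{ij} e^{γ S_j})` and `p_{ij} = a_{ij} σ_j / A_i σ`. -/
theorem gp_linear_combination
    {Ω : Type*} [MeasurableSpace Ω] (μ : Measure Ω) [IsProbabilityMeasure μ]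
    {d m : ℕ} (hd : 0 < d) (hm : 0 < m)
    (γ : ℝ) (hγ : γ ≠ 0) (σ : Fin d → ℝ) (hσ : ∀ j, 0 < σ j)
    (a : Fin m → Fin d → ℝ) (ha : ∀ i j, 0 ≤ a i j)
    (haσ : ∀ i, 0 < ∑ j, a i j * σ j)
    (S : Ω → Fin d → EReal) (E : Ω → ℝ)
    (hSmeas : Measurable S) (hEmeas : Measurable E)
    (hSle : ∀ ω j, S ω j ≤ 0)
    (hSmax : ∀ᵐ ω ∂μ, (⨆ j, S ω j) = 0)
    (hSbot : ∀ j, 0 < μ {ω | ⊥ < S ω j})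
    (hE : ∀ t : ℝ, 0 ≤ t → μ {ω | t < E ω} = ENNReal.ofReal (Real.exp (-t)))
    (hindep : IndepFun S E μ)
    (X : Ω → Fin d → EReal)
    (hX : ∀ ω j, X ω j =
      (σ j : EReal) *
        (((EReal.exp ((γ : EReal) * (S ω j + (E ω : EReal)))) : EReal) - 1) *
        ((γ⁻¹ : ℝ) : EReal))
    (U : Fin m → Ω → EReal)
    (hU : ∀ i ω, U i ω = ((γ⁻¹ : ℝ) : EReal) *
      ENNReal.log (∑ j, ENNReal.ofReal (a i j * σ j / ∑ k, a i k * σ k) *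
        EReal.exp ((γ : EReal) * S ω j)))
    (x : Fin m → ℝ) (hx : ∀ i, 0 < (∑ j, a i j * σ j) + γ * x i) :
    μ {ω | ∃ i, (x i : EReal) < ∑ j, (a i j : EReal) * X ω j} =
      ∫⁻ ω, min 1 (⨆ i,
        ENNReal.ofReal ((1 + γ * x i / ∑ j, a i j * σ j) ^ (-γ⁻¹)) *
          EReal.exp (U i ω)) ∂μ := by
  classical
  set c : Fin m → ℝ := fun i => γ⁻¹ * Real.log (1 + γ * x i / ∑ j, a i j * σ j) with hcdef
  set V : Fin m → (Fin d → EReal) → ℝ≥0∞ := fun i s =>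
    ∑ j, ENNReal.ofReal (a i j * σ j / ∑ k, a i k * σ k) * EReal.exp ((γ : EReal) * s j)
    with hVdef
  set h : Fin m → (Fin d → EReal) → EReal := fun i s =>
    ((γ⁻¹ : ℝ) : EReal) * ENNReal.log (V i s) + ((-(c i) : ℝ) : EReal) with hhdef
  set g : (Fin d → EReal) → EReal := fun s => ⨅ i, -(h i s) with hgdef
  set f : EReal → ℝ≥0∞ := fun t => min 1 (EReal.exp (-t)) with hfdef
  have hvpos : ∀ i, 0 < 1 + γ * x i / ∑ j, a i j * σ j := by
    intro i
    rw [show (1:ℝ) + γ * x i / ∑ j, a i j * σ j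
        = ((∑ j, a i j * σ j) + γ * x i) / ∑ j, a i j * σ j by
          rw [add_div, div_self (haσ i).ne']]
    exact div_pos (hx i) (haσ i)
  -- Step A: identify the event
  have hset : {ω | ∃ i, (x i : EReal) < ∑ j, (a i j : EReal) * X ω j}
      = {ω | g (S ω) < ((E ω : ℝ) : EReal)} := by
    ext ω
    simp only [Set.mem_setOf_eq, hgdef, iInf_lt_iff]
    refine exists_congr fun i => ?_
    rw [EReal.neg_lt_comm, ← EReal.coe_neg]
    simp only [hhdef, hVdef, hcdef, hX]
    exact aux_core hγ hσ (ha i) (haσ i) (fun j => hSle ω j) (E ω) (x i) (hx i)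
  -- measurability
  have hVmeas : ∀ i, Measurable (V i) := by
    intro i
    rw [hVdef]
    refine Finset.measurable_sum _ fun j _ => Measurable.const_mul ?_ _
    have heq : (fun s : Fin d → EReal => EReal.exp ((γ:EReal) * s j))
        = fun s => EReal.exp (s j) ^ γ := by
      funext s; rw [EReal.mul_comm, EReal.exp_mul]
    rw [heq]
    exact ENNReal.continuous_rpow_const.measurable.comp
      (EReal.measurable_exp.comp (measurable_pi_apply j))
  have hhmeas : ∀ i, Measurable (h i) := by
    intro i
    rw [hhdef]
    simp only []
    have hmul : ∀ w : ℝ≥0∞, ((γ⁻¹:ℝ):EReal) * ENNReal.log w = ENNReal.log (w ^ γ⁻¹) :=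
      fun w => (ENNReal.log_rpow).symm
    simp only [hmul]
    have haddc : Monotone (fun t : EReal => t + ((-(c i) : ℝ) : EReal)) :=
      fun p q hpq => add_le_add hpq le_rfl
    exact haddc.measurable.comp (ENNReal.measurable_log.comp
      (ENNReal.continuous_rpow_const.measurable.comp (hVmeas i)))
  have hgmeas : Measurable g := by
    rw [hgdef]
    exact Measurable.iInf fun i => (hhmeas i).neg
  have hfmeas : Measurable f := by
    rw [hfdef]
    exact measurable_const.min (EReal.measurable_exp.comp measurable_neg)
  -- exponential tail
  have hF : ∀ t : EReal, μ {ω | t < ((E ω : ℝ) : EReal)} = f t := by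
    intro t
    induction t using EReal.rec with
    | bot =>
      have h1 : {ω | (⊥:EReal) < ((E ω:ℝ):EReal)} = Set.univ := by
        ext ω; simp [EReal.bot_lt_coe]
      rw [h1, measure_univ, hfdef]
      simp
    | coe t =>
      have h1 : {ω | ((t:ℝ):EReal) < ((E ω:ℝ):EReal)} = {ω | t < E ω} := by
        ext ω; simp [EReal.coe_lt_coe_iff]
      rw [h1, hfdef]
      simp only [← EReal.coe_neg, EReal.exp_coe]
      rcases le_or_gt 0 t with h0 | h0
      · rw [hE t h0]
        exact (min_eq_right (ENNReal.ofReal_le_one.mpr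
          (Real.exp_le_one_iff.mpr (neg_nonpos.mpr h0)))).symm
      · have h2 := hE 0 le_rfl
        rw [neg_zero, Real.exp_zero, ENNReal.ofReal_one] at h2
        have hsub : {ω | (0:ℝ) < E ω} ⊆ {ω | t < E ω} := fun ω hω => lt_trans h0 hω
        have h3 : μ {ω | t < E ω} = 1 :=
          le_antisymm prob_le_one (h2 ▸ measure_mono hsub)
        rw [h3]
        exact (min_eq_left (ENNReal.one_le_ofReal.mpr
          (Real.one_le_exp (by linarith)))).symm
    | top =>
      have h1 : {ω | (⊤:EReal) < ((E ω:ℝ):EReal)} = ∅ := by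
        ext ω; simp [not_top_lt]
      rw [h1, measure_empty, hfdef]
      simp
  -- Step C: independence
  haveI : IsProbabilityMeasure (μ.map E) := Measure.isProbabilityMeasure_map hEmeas.aemeasurable
  have key : μ {ω | g (S ω) < ((E ω : ℝ) : EReal)} = ∫⁻ ω, f (g (S ω)) ∂μ := by
    have hSE : μ.map (fun ω => (S ω, E ω)) = (μ.map S).prod (μ.map E) :=
      (indepFun_iff_map_prod_eq_prod_map_map hSmeas.aemeasurable hEmeas.aemeasurable).mp hindep
    have hmset : MeasurableSet {p : (Fin d → EReal) × ℝ | g p.1 < ((p.2 : ℝ) : EReal)} :=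
      measurableSet_lt (hgmeas.comp measurable_fst)
        (measurable_coe_real_ereal.comp measurable_snd)
    have hmset2 : ∀ t : EReal, MeasurableSet {e : ℝ | t < (e : EReal)} := fun t =>
      measurable_coe_real_ereal measurableSet_Ioi
    calc μ {ω | g (S ω) < ((E ω : ℝ) : EReal)}
        = μ.map (fun ω => (S ω, E ω)) {p : (Fin d → EReal) × ℝ | g p.1 < ((p.2:ℝ):EReal)} := by
          rw [Measure.map_apply (hSmeas.prodMk hEmeas) hmset]; rfl
      _ = ∫⁻ s, (μ.map E) {e : ℝ | g s < (e:EReal)} ∂(μ.map S) := by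
          rw [hSE, Measure.prod_apply hmset]; rfl
      _ = ∫⁻ s, f (g s) ∂(μ.map S) := by
          refine lintegral_congr fun s => ?_
          rw [Measure.map_apply hEmeas (hmset2 (g s))]
          exact hF (g s)
      _ = ∫⁻ ω, f (g (S ω)) ∂μ := lintegral_map (hfmeas.comp hgmeas) hSmeas
  rw [hset, key]
  -- Step D: pointwise identification of the integrand
  refine lintegral_congr fun ω => ?_
  have hneg2 : -(g (S ω)) = ⨆ i, h i (S ω) := by
    rw [hgdef]
    simp only []
    rw [ereal_neg_iInf]
    simp only [neg_neg]
  rw [hfdef]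
  simp only []
  rw [hneg2]
  have hexp : EReal.exp (⨆ i, h i (S ω)) = ⨆ i, EReal.exp (h i (S ω)) := by
    rw [← EReal.expOrderIso_apply, OrderIso.map_iSup]
    simp
  rw [hexp]
  congr 1
  refine iSup_congr fun i => ?_
  rw [hU]
  simp only [hhdef]
  rw [EReal.exp_add, EReal.exp_coe, mul_comm]
  simp only [hVdef]
  congr 1
  rw [hcdef]
  rw [Real.rpow_def_of_pos (hvpos i)]
  congr 1
  ring
end

section
/- Let $U$ be a random vector with $0 < E[e^{U_j}] < \infty$ for all $j$ and Lebesgue density $f_U$ on $\mathbb{R}^d$. Then for $z \in \mathbb{R}^d$: $E[e^{\max(U - (z \wedge 0))}] - E[e^{\max(U - z)}] = \int_{v \le z} \mathbf{1}(v \not\le 0) \int_0^\infty f_U(v + \log t)\, dt\, dv$, where $v + \log t$ adds the scalar $\log t$ to all components and $v \le z$, $v \not\le 0$ are componentwise. -/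
open MeasureTheory

/-- Key identity in the computation of the `GP_U` density: if `U` has Lebesgue density
`f_U` on `ℝ^d` and `0 < E[e^{U_j}] < ∞` for all `j`, then for every `z ∈ ℝ^d`,
`E[e^{max(U - (z ∧ 0))}] - E[e^{max(U - z)}]
  = ∫_{v ≤ z, v ≰ 0} ∫_0^∞ f_U(v + log t) dt dv`. -/
theorem gpU_density_identity
    {Ω : Type*} [MeasurableSpace Ω] (μ : Measure Ω) [IsProbabilityMeasure μ]
    {d : ℕ} (hd : 0 < d)
    (U : Ω → Fin d → ℝ) (hUmeas : Measurable U)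
    (fU : (Fin d → ℝ) → ℝ) (hfU : Measurable fU) (hfUnn : ∀ u, 0 ≤ fU u)
    (hdens : μ.map U = volume.withDensity (fun u => ENNReal.ofReal (fU u)))
    (hint : ∀ j, Integrable (fun ω => Real.exp (U ω j)) μ)
    (hpos : ∀ j, 0 < ∫ ω, Real.exp (U ω j) ∂μ)
    (z : Fin d → ℝ) :
    (∫ ω, Real.exp (⨆ j, (U ω j - min (z j) 0)) ∂μ)
        - ∫ ω, Real.exp (⨆ j, (U ω j - z j)) ∂μ =
      ∫ v in {v : Fin d → ℝ | (∀ j, v j ≤ z j) ∧ ∃ j, 0 < v j},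
        (∫ t in Set.Ioi (0 : ℝ), fU (fun j => v j + Real.log t)) ∂volume := by
  have hne : Nonempty (Fin d) := ⟨⟨0, hd⟩⟩
  set T : Set (Fin d → ℝ) := {v | (∀ j, v j ≤ z j) ∧ ∃ j, 0 < v j} with hTdef
  have hTmeas : MeasurableSet T := by
    apply MeasurableSet.inter
    · show MeasurableSet {v : Fin d → ℝ | ∀ j, v j ≤ z j}
      rw [Set.setOf_forall]
      exact MeasurableSet.iInter fun j =>
        measurableSet_le (measurable_pi_apply j) measurable_const
    · show MeasurableSet {v : Fin d → ℝ | ∃ j, 0 < v j}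
      rw [Set.setOf_exists]
      exact MeasurableSet.iUnion fun j =>
        measurableSet_lt measurable_const (measurable_pi_apply j)
  -- measurability of the sup
  have hsupmeas : ∀ w : Fin d → ℝ,
      Measurable fun ω => ⨆ j, (U ω j - w j) := fun w =>
    Measurable.iSup fun j => ((measurable_pi_apply j).comp hUmeas).sub measurable_const
  -- layer cake representation
  have hAeq : ∀ w : Fin d → ℝ,
      (∫⁻ ω, ENNReal.ofReal (Real.exp (⨆ j, (U ω j - w j))) ∂μ)
        = ∫⁻ t in Set.Ioi (0:ℝ), μ {a | ∃ j, w j + Real.log t < U a j} := by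
    intro w
    rw [lintegral_eq_lintegral_meas_lt μ (ae_of_all _ fun ω => (Real.exp_pos _).le)
      ((hsupmeas w).exp.aemeasurable)]
    refine setLIntegral_congr_fun measurableSet_Ioi (fun t ht => ?_)
    congr 1
    ext a
    simp only [Set.mem_setOf_eq]
    rw [← Real.log_lt_iff_lt_exp ht, lt_ciSup_iff (Set.finite_range _).bddAbove]
    constructor <;> rintro ⟨j, hj⟩ <;> exact ⟨j, by linarith⟩
  -- finiteness
  have hAfin : ∀ w : Fin d → ℝ,
      (∫⁻ ω, ENNReal.ofReal (Real.exp (⨆ j, (U ω j - w j))) ∂μ) < ⊤ := by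
    intro w
    have hle : ∀ ω, ENNReal.ofReal (Real.exp (⨆ j, (U ω j - w j)))
        ≤ ∑ j, ENNReal.ofReal (Real.exp (- w j) * Real.exp (U ω j)) := by
      intro ω
      obtain ⟨j₀, hj₀⟩ := exists_eq_ciSup_of_finite (f := fun j => U ω j - w j)
      rw [← hj₀]
      have : Real.exp (U ω j₀ - w j₀) = Real.exp (- w j₀) * Real.exp (U ω j₀) := by
        rw [← Real.exp_add]; ring_nf
      rw [this]
      exact Finset.single_le_sum (f := fun j => ENNReal.ofReal (Real.exp (- w j) * Real.exp (U ω j))) (fun j _ => zero_le) (Finset.mem_univ j₀)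
    calc ∫⁻ ω, ENNReal.ofReal (Real.exp (⨆ j, (U ω j - w j))) ∂μ
        ≤ ∫⁻ ω, ∑ j, ENNReal.ofReal (Real.exp (- w j) * Real.exp (U ω j)) ∂μ :=
          lintegral_mono hle
      _ = ∑ j, ∫⁻ ω, ENNReal.ofReal (Real.exp (- w j) * Real.exp (U ω j)) ∂μ :=
          lintegral_finset_sum _ fun j _ =>
            (measurable_const.mul (((measurable_pi_apply j).comp hUmeas).exp)).ennreal_ofReal
      _ < ⊤ := by
          rw [ENNReal.sum_lt_top]
          intro j _
          have : (fun ω => Real.exp (- w j) * Real.exp (U ω j)) =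
              fun ω => Real.exp (- w j) * Real.exp (U ω j) := rfl
          have hInt : Integrable (fun ω => Real.exp (- w j) * Real.exp (U ω j)) μ :=
            (hint j).const_mul _
          exact hInt.lintegral_lt_top
  -- the three events
  set Dt : ℝ → Set Ω := fun t =>
    {a | (∀ j, U a j ≤ z j + Real.log t) ∧ ∃ j, Real.log t < U a j} with hDtdef
  have hDtmeasSet : ∀ t, MeasurableSet (Dt t) := by
    intro t
    apply MeasurableSet.inter
    · show MeasurableSet {a : Ω | ∀ j, U a j ≤ z j + Real.log t}
      rw [Set.setOf_forall]
      exact MeasurableSet.iInter fun j =>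
        measurableSet_le ((measurable_pi_apply j).comp hUmeas) measurable_const
    · show MeasurableSet {a : Ω | ∃ j, Real.log t < U a j}
      rw [Set.setOf_exists]
      exact MeasurableSet.iUnion fun j =>
        measurableSet_lt measurable_const ((measurable_pi_apply j).comp hUmeas)
  -- pointwise decomposition
  have hdecomp : ∀ t : ℝ,
      μ {a | ∃ j, min (z j) 0 + Real.log t < U a j}
        = μ (Dt t) + μ {a | ∃ j, z j + Real.log t < U a j} := by
    intro t
    have hunion : {a | ∃ j, min (z j) 0 + Real.log t < U a j}
        = Dt t ∪ {a | ∃ j, z j + Real.log t < U a j} := by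
      ext a
      simp only [hDtdef, Set.mem_union, Set.mem_setOf_eq]
      constructor
      · rintro ⟨j, hj⟩
        by_cases hall : ∀ k, U a k ≤ z k + Real.log t
        · left
          refine ⟨hall, ?_⟩
          have h1 : min (z j) 0 < z j := lt_of_add_lt_add_right (hj.trans_le (hall j))
          have h2 : min (z j) 0 = 0 := by
            rcases min_cases (z j) 0 with ⟨h, _⟩ | ⟨h, _⟩ <;> [exact absurd h (by simp [h1.ne]); exact h]
          exact ⟨j, by rw [h2] at hj; linarith⟩
        · right
          push_neg at hall
          obtain ⟨k, hk⟩ := hall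
          exact ⟨k, hk⟩
      · rintro (⟨hall, j, hj⟩ | ⟨j, hj⟩)
        · exact ⟨j, by have := min_le_right (z j) 0; linarith⟩
        · exact ⟨j, by have := min_le_left (z j) 0; linarith⟩
    have hdisj : Disjoint (Dt t) {a | ∃ j, z j + Real.log t < U a j} := by
      rw [Set.disjoint_left]
      rintro a ⟨hall, _⟩ ⟨j, hj⟩
      exact absurd (hall j) (not_le.2 hj)
    rw [hunion, measure_union hdisj]
    · rw [Set.setOf_exists]
      exact MeasurableSet.iUnion fun j =>
        measurableSet_lt measurable_const ((measurable_pi_apply j).comp hUmeas)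
  -- measurability in t of t ↦ μ (Dt t) and of μ N_z
  have hmeasD : Measurable fun t : ℝ => μ (Dt t) := by
    have hs : MeasurableSet {p : ℝ × Ω |
        (∀ j, U p.2 j ≤ z j + Real.log p.1) ∧ ∃ j, Real.log p.1 < U p.2 j} := by
      apply MeasurableSet.inter
      · show MeasurableSet {p : ℝ × Ω | ∀ j, U p.2 j ≤ z j + Real.log p.1}
        rw [Set.setOf_forall]
        exact MeasurableSet.iInter fun j =>
          measurableSet_le ((measurable_pi_apply j).comp (hUmeas.comp measurable_snd))
            (measurable_const.add (Real.measurable_log.comp measurable_fst))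
      · show MeasurableSet {p : ℝ × Ω | ∃ j, Real.log p.1 < U p.2 j}
        rw [Set.setOf_exists]
        exact MeasurableSet.iUnion fun j =>
          measurableSet_lt (Real.measurable_log.comp measurable_fst)
            ((measurable_pi_apply j).comp (hUmeas.comp measurable_snd))
    exact measurable_measure_prodMk_left hs
  have hmeasN : Measurable fun t : ℝ => μ {a | ∃ j, z j + Real.log t < U a j} := by
    have hs : MeasurableSet {p : ℝ × Ω | ∃ j, z j + Real.log p.1 < U p.2 j} := by
      rw [Set.setOf_exists]
      exact MeasurableSet.iUnion fun j =>
        measurableSet_lt (measurable_const.add (Real.measurable_log.comp measurable_fst))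
          ((measurable_pi_apply j).comp (hUmeas.comp measurable_snd))
    exact measurable_measure_prodMk_left hs
  -- key ENNReal identity
  have hkey : (∫⁻ ω, ENNReal.ofReal (Real.exp (⨆ j, (U ω j - min (z j) 0))) ∂μ)
      - (∫⁻ ω, ENNReal.ofReal (Real.exp (⨆ j, (U ω j - z j))) ∂μ)
      = ∫⁻ t in Set.Ioi (0:ℝ), μ (Dt t) := by
    rw [hAeq (fun j => min (z j) 0), hAeq z]
    have h1 : (∫⁻ t in Set.Ioi (0:ℝ), μ {a | ∃ j, min (z j) 0 + Real.log t < U a j})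
        = (∫⁻ t in Set.Ioi (0:ℝ), μ (Dt t))
          + ∫⁻ t in Set.Ioi (0:ℝ), μ {a | ∃ j, z j + Real.log t < U a j} := by
      rw [← lintegral_add_left hmeasD]
      exact lintegral_congr fun t => hdecomp t
    refine ENNReal.sub_eq_of_eq_add ?_ h1
    rw [← hAeq z]
    exact (hAfin z).ne
  -- rewrite μ (Dt t) via the density and translation
  have hDt : ∀ t : ℝ, μ (Dt t)
      = ∫⁻ v in T, ENNReal.ofReal (fU (fun j => v j + Real.log t)) := by
    intro t
    set c : Fin d → ℝ := fun _ => Real.log t with hcdef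
    set S : Set (Fin d → ℝ) :=
      {u | (∀ j, u j ≤ z j + Real.log t) ∧ ∃ j, Real.log t < u j} with hSdef
    have hSmeas : MeasurableSet S := by
      apply MeasurableSet.inter
      · show MeasurableSet {u : Fin d → ℝ | ∀ j, u j ≤ z j + Real.log t}
        rw [Set.setOf_forall]
        exact MeasurableSet.iInter fun j =>
          measurableSet_le (measurable_pi_apply j) measurable_const
      · show MeasurableSet {u : Fin d → ℝ | ∃ j, Real.log t < u j}
        rw [Set.setOf_exists]
        exact MeasurableSet.iUnion fun j =>
          measurableSet_lt measurable_const (measurable_pi_apply j)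
    have h1 : Dt t = U ⁻¹' S := rfl
    rw [h1, ← Measure.map_apply hUmeas hSmeas, hdens, withDensity_apply _ hSmeas]
    have hmem : ∀ v : Fin d → ℝ, (v + c) ∈ S ↔ v ∈ T := by
      intro v
      simp only [hSdef, hTdef, Set.mem_setOf_eq, Pi.add_apply, hcdef]
      constructor
      · rintro ⟨h1, j, h2⟩
        exact ⟨fun j => by have := h1 j; linarith, j, by linarith⟩
      · rintro ⟨h1, j, h2⟩
        exact ⟨fun j => by have := h1 j; linarith, j, by linarith⟩
    rw [← lintegral_indicator hSmeas, ← lintegral_indicator hTmeas,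
      ← lintegral_add_right_eq_self
        (fun u => Set.indicator S (fun u => ENNReal.ofReal (fU u)) u) c]
    refine lintegral_congr fun v => ?_
    by_cases hv : v ∈ T
    · rw [Set.indicator_of_mem ((hmem v).2 hv), Set.indicator_of_mem hv]
      congr 1
    · rw [Set.indicator_of_notMem (fun h => hv ((hmem v).1 h)),
        Set.indicator_of_notMem hv]
  -- joint measurability and Tonelli
  have hjoint : Measurable fun p : ℝ × (Fin d → ℝ) =>
      ENNReal.ofReal (fU (fun j => p.2 j + Real.log p.1)) := by
    apply Measurable.ennreal_ofReal
    apply hfU.comp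
    exact measurable_pi_lambda _ fun j =>
      ((measurable_pi_apply j).comp measurable_snd).add
        (Real.measurable_log.comp measurable_fst)
  have hswap : (∫⁻ t in Set.Ioi (0:ℝ),
        ∫⁻ v in T, ENNReal.ofReal (fU (fun j => v j + Real.log t)))
      = ∫⁻ v in T, ∫⁻ t in Set.Ioi (0:ℝ),
          ENNReal.ofReal (fU (fun j => v j + Real.log t)) := by
    exact lintegral_lintegral_swap hjoint.aemeasurable
  -- now convert to real integrals
  set H : (Fin d → ℝ) → ENNReal := fun v =>
    ∫⁻ t in Set.Ioi (0:ℝ), ENNReal.ofReal (fU (fun j => v j + Real.log t)) with hHdef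
  have hHmeas : Measurable H := by
    apply Measurable.lintegral_prod_right
    exact hjoint.comp (measurable_swap)
  have htot : (∫⁻ v in T, H v) < ⊤ := by
    rw [← hswap]
    calc (∫⁻ t in Set.Ioi (0:ℝ),
          ∫⁻ v in T, ENNReal.ofReal (fU (fun j => v j + Real.log t)))
        = ∫⁻ t in Set.Ioi (0:ℝ), μ (Dt t) := by
          exact lintegral_congr fun t => (hDt t).symm
      _ = (∫⁻ ω, ENNReal.ofReal (Real.exp (⨆ j, (U ω j - min (z j) 0))) ∂μ)
          - (∫⁻ ω, ENNReal.ofReal (Real.exp (⨆ j, (U ω j - z j))) ∂μ) := hkey.symm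
      _ < ⊤ := lt_of_le_of_lt (tsub_le_self) (hAfin _)
  -- RHS equals (∫⁻ v in T, H v).toReal
  have hRHS : (∫ v in T, (∫ t in Set.Ioi (0 : ℝ), fU (fun j => v j + Real.log t)) ∂volume)
      = (∫⁻ v in T, H v).toReal := by
    have hinner : ∀ v : Fin d → ℝ,
        (∫ t in Set.Ioi (0 : ℝ), fU (fun j => v j + Real.log t)) = (H v).toReal := by
      intro v
      rw [integral_eq_lintegral_of_nonneg_ae (f := fun t => fU (fun j => v j + Real.log t)) (ae_of_all _ fun t => hfUnn _)
        ((hfU.comp (measurable_pi_lambda _ fun j =>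
          measurable_const.add Real.measurable_log)).aestronglyMeasurable)]
    simp_rw [hinner]
    exact integral_toReal hHmeas.aemeasurable (ae_lt_top hHmeas htot.ne)
  -- LHS equals (A₀ - A_z).toReal
  have hLHS0 : (∫ ω, Real.exp (⨆ j, (U ω j - min (z j) 0)) ∂μ)
      = (∫⁻ ω, ENNReal.ofReal (Real.exp (⨆ j, (U ω j - min (z j) 0))) ∂μ).toReal := by
    rw [integral_eq_lintegral_of_nonneg_ae (ae_of_all _ fun ω => (Real.exp_pos _).le)
      ((hsupmeas _).exp.aestronglyMeasurable)]
  have hLHSz : (∫ ω, Real.exp (⨆ j, (U ω j - z j)) ∂μ)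
      = (∫⁻ ω, ENNReal.ofReal (Real.exp (⨆ j, (U ω j - z j))) ∂μ).toReal := by
    rw [integral_eq_lintegral_of_nonneg_ae (ae_of_all _ fun ω => (Real.exp_pos _).le)
      ((hsupmeas _).exp.aestronglyMeasurable)]
  have hle : (∫⁻ ω, ENNReal.ofReal (Real.exp (⨆ j, (U ω j - z j))) ∂μ)
      ≤ ∫⁻ ω, ENNReal.ofReal (Real.exp (⨆ j, (U ω j - min (z j) 0))) ∂μ := by
    apply lintegral_mono
    intro ω
    apply ENNReal.ofReal_le_ofReal
    apply Real.exp_le_exp.2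
    apply ciSup_mono (Set.finite_range _).bddAbove
    intro j
    have := min_le_left (z j) 0
    linarith
  rw [hLHS0, hLHSz, ← ENNReal.toReal_sub_of_le hle (hAfin _).ne, hkey, hRHS]
  congr 1
  rw [← hswap]
  exact lintegral_congr fun t => hDt t
end
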